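/- arXiv:2006.03756 — 5 statements merged into one kernel-verified Lean document; each statement's English description precedes it below -/
import Mathlib

section
/- Let k ≥ 2 and let G be a K_k-free graph. Let K be a copy of K_{k−1} in G and let Y be a clique of G vertex-disjoint from K. Then the bipartite 'non-adjacency' graph between Y and V(K) (where y∈Y and x∈K are joined iff yx is not an edge of G) contains a matching saturating Y. -/
open SimpleGraph Finset

/-- In a `K_k`-free graph `G`, if `K` is a clique of size `k - 1` and `Y` is a clique
vertex-disjoint from `K`, then the bipartite "non-adjacency" graph between `Y` and `K`
has a matching saturating `Y`: there is an injective map `f` from `Y` into `K` with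
`y` non-adjacent to `f y` for every `y ∈ Y`. -/
theorem nonadjacency_matching_saturating_clique {V : Type*} (G : SimpleGraph V) (k : ℕ)
    (hk : 2 ≤ k) (hfree : G.CliqueFree k) (K Y : Finset V)
    (hK : G.IsNClique (k - 1) K) (hY : G.IsClique (Y : Set V)) (hdisj : Disjoint K Y) :
    ∃ f : V → V, Set.InjOn f (Y : Set V) ∧
      ∀ y ∈ Y, f y ∈ K ∧ ¬ G.Adj y (f y) := by
  classical
  set t : {y // y ∈ Y} → Finset V := fun y => K.filter (fun x => ¬ G.Adj y x) with ht
  have hall : ∀ s : Finset {y // y ∈ Y}, #s ≤ #(s.biUnion t) := by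
    intro s
    by_contra hlt
    push_neg at hlt
    set N := s.biUnion t with hN
    have hNK : N ⊆ K := by
      intro x hx
      simp only [hN, mem_biUnion, ht, mem_filter] at hx
      obtain ⟨y, _, hxK, _⟩ := hx
      exact hxK
    set Y' := s.image Subtype.val with hY'
    have hY'Y : Y' ⊆ Y := by
      intro x hx
      simp only [hY', mem_image] at hx
      obtain ⟨⟨y, hy⟩, _, rfl⟩ := hx
      exact hy
    have hcardY' : #Y' = #s := card_image_of_injective _ Subtype.val_injective
    have hdisj2 : Disjoint Y' (K \ N) := by
      exact Finset.disjoint_of_subset_left hY'Y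
        (Finset.disjoint_of_subset_right (sdiff_subset) hdisj.symm)
    -- the set Y' ∪ (K \ N) is a clique
    have hclique : G.IsClique ((Y' ∪ (K \ N) : Finset V) : Set V) := by
      intro a ha b hb hab
      simp only [coe_union, Set.mem_union, mem_coe, mem_sdiff] at ha hb
      have key : ∀ y x, y ∈ Y' → x ∈ K → x ∉ N → G.Adj y x := by
        intro y x hy hxK hxN
        by_contra hadj
        apply hxN
        simp only [hY', mem_image] at hy
        obtain ⟨y', hy', rfl⟩ := hy
        simp only [hN, mem_biUnion]
        exact ⟨y', hy', by simp [ht, hxK, hadj]⟩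
      rcases ha with ha | ⟨haK, haN⟩ <;> rcases hb with hb | ⟨hbK, hbN⟩
      · exact hY (hY'Y ha) (hY'Y hb) hab
      · exact key a b ha hbK hbN
      · exact (key b a hb haK haN).symm
      · exact hK.1 haK hbK hab
    have hNcard : #N ≤ k - 1 := hK.2 ▸ card_le_card hNK
    have hcard : k ≤ #(Y' ∪ (K \ N)) := by
      rw [card_union_of_disjoint hdisj2, card_sdiff_of_subset hNK, hK.2, hcardY']
      omega
    obtain ⟨u, hu, hucard⟩ := Finset.exists_subset_card_eq hcard
    exact hfree u ⟨hclique.subset (by exact_mod_cast hu), hucard⟩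
  obtain ⟨f, hfinj, hf⟩ := (Finset.all_card_le_biUnion_card_iff_exists_injective t).mp hall
  refine ⟨fun v => if h : v ∈ Y then f ⟨v, h⟩ else v, ?_, ?_⟩
  · intro a ha b hb hab
    simp only [mem_coe] at ha hb
    simp only [dif_pos ha, dif_pos hb] at hab
    exact Subtype.ext_iff.mp (hfinj hab)
  · intro y hy
    have := hf ⟨y, hy⟩
    simp only [ht, mem_filter] at this
    simp only [dif_pos hy]
    exact this
end

section
/- The number of homomorphic walks with l−1 edges in a graph G on n vertices is at most μ^{l−1}·n, where μ is the largest eigenvalue of the adjacency matrix of G; consequently the number of paths P_l in G is at most μ^{l−1}·n/2. -/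
open SimpleGraph


/-! ### Auxiliary linear algebra lemmas -/

open Matrix in
private lemma pow_mulVec_eig {n : ℕ} (A : Matrix (Fin n) (Fin n) ℝ) (hA : A.IsHermitian) (k : ℕ)
    (j : Fin n) :
    (A ^ k) *ᵥ ⇑(hA.eigenvectorBasis j) = (hA.eigenvalues j ^ k) • ⇑(hA.eigenvectorBasis j) := by
  induction k with
  | zero => simp
  | succ k ih =>
    rw [pow_succ', ← mulVec_mulVec, ih, mulVec_smul, hA.mulVec_eigenvectorBasis, smul_smul,
      pow_succ']
    congr 1
    ring

open Matrix in
private lemma dot_basis_eq {n : ℕ} (B : OrthonormalBasis (Fin n) ℝ (EuclideanSpace ℝ (Fin n)))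
    (x : EuclideanSpace ℝ (Fin n)) (j : Fin n) :
    (⇑x : Fin n → ℝ) ⬝ᵥ ⇑(B j) = B.repr x j := by
  rw [B.repr_apply_apply]
  simp [PiLp.inner_apply, RCLike.inner_apply, dotProduct, mul_comm]

open Matrix in
private lemma dot_sum {n m : ℕ} (x : Fin n → ℝ) (f : Fin m → Fin n → ℝ) :
    x ⬝ᵥ (∑ j, f j) = ∑ j, x ⬝ᵥ f j := by
  simp only [dotProduct, Finset.sum_apply, Finset.mul_sum]
  exact Finset.sum_comm

open Matrix in
private lemma quad_eq {n : ℕ} (A : Matrix (Fin n) (Fin n) ℝ) (hA : A.IsHermitian) (k : ℕ)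
    (x : EuclideanSpace ℝ (Fin n)) :
    (⇑x : Fin n → ℝ) ⬝ᵥ ((A ^ k) *ᵥ ⇑x) =
      ∑ j, hA.eigenvalues j ^ k * (hA.eigenvectorBasis.repr x j)^2 := by
  set B := hA.eigenvectorBasis with hB
  have hx : (⇑x : Fin n → ℝ) = ∑ j, B.repr x j • ⇑(B j) := by
    conv_lhs => rw [← B.sum_repr x]
    simp [WithLp.ofLp_sum, WithLp.ofLp_smul]
  have hy : (A ^ k) *ᵥ (⇑x : Fin n → ℝ) = ∑ j, (B.repr x j * hA.eigenvalues j ^ k) • ⇑(B j) := by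
    conv_lhs => rw [hx]
    rw [← mulVecLin_apply, map_sum]
    simp_rw [_root_.map_smul, mulVecLin_apply, hB, pow_mulVec_eig A hA, smul_smul]
  rw [hy, dot_sum]
  refine Finset.sum_congr rfl fun j _ => ?_
  rw [dotProduct_smul, smul_eq_mul, dot_basis_eq]
  ring

private lemma sum_sq_repr {n : ℕ} (B : OrthonormalBasis (Fin n) ℝ (EuclideanSpace ℝ (Fin n)))
    (x : EuclideanSpace ℝ (Fin n)) :
    ∑ j, (B.repr x j)^2 = ∑ i, (x i)^2 := by
  have h := B.repr.inner_map_map x x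
  simp only [PiLp.inner_apply, RCLike.inner_apply, conj_trivial] at h
  calc ∑ j, (B.repr x j)^2 = ∑ j, (B.repr x j) * (B.repr x j) := by simp [sq]
    _ = ∑ i, x i * x i := h
    _ = ∑ i, (x i)^2 := by simp [sq]

open Matrix in
private lemma abs_eig_le {n : ℕ} (A : Matrix (Fin n) (Fin n) ℝ) (hA : A.IsHermitian)
    (hpos : ∀ i j, 0 ≤ A i j) (μ : ℝ) (hmax : ∀ i, hA.eigenvalues i ≤ μ) (j : Fin n) :
    |hA.eigenvalues j| ≤ μ := by
  set B := hA.eigenvectorBasis with hB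
  set v : EuclideanSpace ℝ (Fin n) := B j with hv
  have hnorm : ∑ i, (v i)^2 = 1 := by
    have h1 : ‖v‖ = 1 := B.orthonormal.1 j
    have h2 : (inner ℝ v v : ℝ) = 1 := by
      rw [real_inner_self_eq_norm_sq, h1]; norm_num
    rw [PiLp.inner_apply] at h2
    simpa [sq] using h2
  set w : EuclideanSpace ℝ (Fin n) := WithLp.toLp 2 (fun i => |v i|) with hw
  have hw2 : ∑ i, (w i)^2 = 1 := by simp only [hw, PiLp.toLp_apply, sq_abs]; exact hnorm
  have h1 : (⇑v : Fin n → ℝ) ⬝ᵥ (A *ᵥ ⇑v) = hA.eigenvalues j := by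
    rw [hA.mulVec_eigenvectorBasis]
    rw [dotProduct_smul, smul_eq_mul]
    have : (⇑v : Fin n → ℝ) ⬝ᵥ ⇑v = 1 := by
      simpa [dotProduct, sq] using hnorm
    rw [this, mul_one]
  have h2 : |(⇑v : Fin n → ℝ) ⬝ᵥ (A *ᵥ ⇑v)| ≤ (⇑w : Fin n → ℝ) ⬝ᵥ (A *ᵥ ⇑w) := by
    simp only [dotProduct, Matrix.mulVec]
    calc |∑ i, v i * ∑ m, A i m * v m| ≤ ∑ i, |v i * ∑ m, A i m * v m| :=
          Finset.abs_sum_le_sum_abs _ _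
      _ ≤ ∑ i, w i * ∑ m, A i m * w m := by
          refine Finset.sum_le_sum fun i _ => ?_
          rw [abs_mul]
          refine mul_le_mul_of_nonneg_left ?_ (abs_nonneg _)
          calc |∑ m, A i m * v m| ≤ ∑ m, |A i m * v m| := Finset.abs_sum_le_sum_abs _ _
            _ = ∑ m, A i m * w m := by
                refine Finset.sum_congr rfl fun m _ => ?_
                rw [abs_mul, abs_of_nonneg (hpos i m)]
  have h3 : (⇑w : Fin n → ℝ) ⬝ᵥ (A *ᵥ ⇑w) ≤ μ := by
    have hq := quad_eq A hA 1 w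
    rw [pow_one] at hq
    rw [hq]
    calc ∑ i, hA.eigenvalues i ^ 1 * (B.repr w i)^2
        ≤ ∑ i, μ * (B.repr w i)^2 := by
          refine Finset.sum_le_sum fun i _ => ?_
          exact mul_le_mul_of_nonneg_right (by simpa using hmax i) (sq_nonneg _)
      _ = μ * ∑ i, (B.repr w i)^2 := by rw [Finset.mul_sum]
      _ = μ := by rw [sum_sq_repr, hw2, mul_one]
  calc |hA.eigenvalues j| = |(⇑v : Fin n → ℝ) ⬝ᵥ (A *ᵥ ⇑v)| := by rw [h1]
    _ ≤ _ := h2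
    _ ≤ μ := h3

open Matrix in
private lemma sum_entries_pow_le {n : ℕ} (A : Matrix (Fin n) (Fin n) ℝ) (hA : A.IsHermitian)
    (hpos : ∀ i j, 0 ≤ A i j) (μ : ℝ) (hmax : ∀ i, hA.eigenvalues i ≤ μ) (k : ℕ) :
    ∑ u, ∑ v, (A ^ k) u v ≤ μ ^ k * n := by
  set x : EuclideanSpace ℝ (Fin n) := WithLp.toLp 2 (fun _ => 1) with hxdef
  have hdot : (⇑x : Fin n → ℝ) ⬝ᵥ ((A ^ k) *ᵥ ⇑x) = ∑ u, ∑ v, (A ^ k) u v := by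
    simp [dotProduct, Matrix.mulVec, hxdef]
  rw [← hdot, quad_eq A hA k x]
  have hsq : ∑ j, (hA.eigenvectorBasis.repr x j)^2 = (n : ℝ) := by
    rw [sum_sq_repr]
    simp [hxdef]
  calc ∑ j, hA.eigenvalues j ^ k * (hA.eigenvectorBasis.repr x j)^2
      ≤ ∑ j, μ ^ k * (hA.eigenvectorBasis.repr x j)^2 := by
        refine Finset.sum_le_sum fun j _ => ?_
        refine mul_le_mul_of_nonneg_right ?_ (sq_nonneg _)
        calc hA.eigenvalues j ^ k ≤ |hA.eigenvalues j ^ k| := le_abs_self _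
          _ = |hA.eigenvalues j| ^ k := abs_pow _ _
          _ ≤ μ ^ k := pow_le_pow_left₀ (abs_nonneg _) (abs_eig_le A hA hpos μ hmax j) k
    _ = μ ^ k * (n : ℝ) := by rw [← Finset.mul_sum, hsq]

/-! ### The canonical Hamiltonian walk in the path graph -/

private def pathHom (m : ℕ) : pathGraph (m + 1) →g pathGraph (m + 2) where
  toFun := Fin.castSucc
  map_rel' := by
    intro a b hab
    rw [pathGraph_adj] at hab ⊢
    simpa using hab

private lemma pathHom_adj (m : ℕ) :
    (pathGraph (m + 2)).Adj ((pathHom m) (Fin.last m)) (Fin.last (m + 1)) := by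
  rw [pathGraph_adj]
  left
  rfl

private def pathWalk : (m : ℕ) → (pathGraph (m + 1)).Walk ⟨0, Nat.succ_pos m⟩ (Fin.last m)
  | 0 => Walk.nil
  | m + 1 => Walk.concat ((pathWalk m).map (pathHom m)) (pathHom_adj m)

private lemma pathWalk_length (m : ℕ) : (pathWalk m).length = m := by
  induction m with
  | zero => rfl
  | succ m ih =>
    show (Walk.concat ((pathWalk m).map (pathHom m)) (pathHom_adj m)).length = m + 1
    rw [Walk.length_concat, Walk.length_map, ih]

private lemma pathWalk_toSubgraph (m : ℕ) : (pathWalk m).toSubgraph = ⊤ := by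
  induction m with
  | zero =>
    ext x y
    · simp only [pathWalk, Walk.toSubgraph, Subgraph.verts_top, Set.mem_univ, iff_true]
      simp only [singletonSubgraph_verts, Set.mem_singleton_iff]
      exact Fin.ext (by omega)
    · simp only [pathWalk, Walk.toSubgraph, singletonSubgraph_adj, Pi.bot_apply,
        Subgraph.top_adj, pathGraph_adj]
      constructor
      · intro h; exact h.elim
      · intro h; omega
  | succ m ih =>
    show (Walk.concat ((pathWalk m).map (pathHom m)) (pathHom_adj m)).toSubgraph = ⊤
    rw [Walk.concat_eq_append, Walk.toSubgraph_append, Walk.toSubgraph_map, ih]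
    have key : ∀ v w : Fin (m + 2), (v : ℕ) + 1 = (w : ℕ) →
        ((⊤ : (pathGraph (m + 1)).Subgraph).map (pathHom m) ⊔
          (Walk.cons (pathHom_adj m) Walk.nil).toSubgraph).Adj v w := by
      intro v w hvw
      have hwle : (w : ℕ) ≤ m + 1 := by omega
      by_cases hw : (w : ℕ) < m + 1
      · left
        refine ⟨⟨v, by omega⟩, ⟨w, hw⟩, ?_, ?_, ?_⟩
        · rw [Subgraph.top_adj, pathGraph_adj]; left; exact hvw
        · exact Fin.ext rfl
        · exact Fin.ext rfl
      · right
        rw [Walk.toSubgraph_cons_nil_eq_subgraphOfAdj, subgraphOfAdj_adj]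
        have hv : v = (pathHom m) (Fin.last m) := Fin.ext (by show (v : ℕ) = m; omega)
        have hw' : w = Fin.last (m + 1) := Fin.ext (by show (w : ℕ) = m + 1; omega)
        rw [hv, hw']
    ext x y
    · simp only [Subgraph.verts_sup, Set.mem_union, Subgraph.verts_top, Set.mem_univ, iff_true]
      by_cases hx : (x : ℕ) < m + 1
      · left
        exact ⟨⟨x, hx⟩, Set.mem_univ _, Fin.ext rfl⟩
      · right
        rw [Walk.toSubgraph_cons_nil_eq_subgraphOfAdj]
        simp only [subgraphOfAdj_verts, Set.mem_insert_iff, Set.mem_singleton_iff]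
        right
        exact Fin.ext (by show (x : ℕ) = m + 1; omega)
    · rw [Subgraph.sup_adj, Subgraph.top_adj]
      constructor
      · rintro (⟨a, b, hab, rfl, rfl⟩ | h)
        · rw [Subgraph.top_adj] at hab
          exact (pathHom m).map_adj hab
        · rw [Walk.toSubgraph_cons_nil_eq_subgraphOfAdj, subgraphOfAdj_adj] at h
          rw [Sym2.eq_iff] at h
          rcases h with ⟨rfl, rfl⟩ | ⟨rfl, rfl⟩
          · exact pathHom_adj m
          · exact (pathHom_adj m).symm
      · intro h
        rw [pathGraph_adj] at h
        rcases h with h | h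
        · exact key x y h
        · exact ((key y x h).symm)

/-! ### Subgraph lemmas -/

private lemma iso_map_top {V W : Type*} {A : SimpleGraph V} {B : SimpleGraph W} (φ : A ≃g B) :
    (⊤ : A.Subgraph).map φ.toHom = ⊤ := by
  ext x y
  · simp only [Subgraph.map_verts, Subgraph.verts_top, Set.image_univ, Set.mem_univ, iff_true]
    exact ⟨φ.symm x, φ.apply_symm_apply x⟩
  · simp only [Subgraph.map_adj, Subgraph.top_adj]
    constructor
    · rintro ⟨a, b, hab, rfl, rfl⟩
      rw [Subgraph.top_adj] at hab
      exact φ.map_adj_iff.mpr hab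
    · intro h
      exact ⟨φ.symm x, φ.symm y, by rw [Subgraph.top_adj]; exact φ.symm.map_adj_iff.mpr h,
        φ.apply_symm_apply x, φ.apply_symm_apply y⟩

private lemma map_hom_top {V : Type*} {G : SimpleGraph V} (c : G.Subgraph) :
    (⊤ : c.coe.Subgraph).map c.hom = c := by
  ext x y
  · simp only [Subgraph.map_verts, Subgraph.verts_top, Set.image_univ]
    constructor
    · rintro ⟨a, rfl⟩; exact a.2
    · intro h; exact ⟨⟨x, h⟩, rfl⟩
  · simp only [Subgraph.map_adj]
    constructor
    · rintro ⟨a, b, hab, rfl, rfl⟩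
      rw [Subgraph.top_adj] at hab
      exact hab
    · intro h
      exact ⟨⟨x, c.edge_vert h⟩, ⟨y, c.edge_vert h.symm⟩, by rw [Subgraph.top_adj]; exact h,
        rfl, rfl⟩

private instance subgraphFinite {V : Type*} [Finite V] {G : SimpleGraph V} :
    Finite G.Subgraph := by
  have : Function.Injective (fun c : G.Subgraph => (c.verts, c.Adj)) := by
    intro c d h
    simp only [Prod.mk.injEq] at h
    exact Subgraph.ext h.1 h.2
  exact Finite.of_injective _ this

/-! ### Encoding copies of the path graph as walks -/

private abbrev Copies {n : ℕ} (m : ℕ) (G : SimpleGraph (Fin n)) :=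
  {c : G.Subgraph // Nonempty (c.coe ≃g pathGraph (m + 1))}

variable {n m : ℕ} {G : SimpleGraph (Fin n)}

private noncomputable def copyHom (c : Copies m G) : pathGraph (m + 1) →g G :=
  c.1.hom.comp (c.2.some.symm.toHom)

private lemma copyHom_inj (c : Copies m G) : Function.Injective (copyHom c) := by
  intro a b hab
  have h1 : (c.2.some.symm a : Fin n) = (c.2.some.symm b : Fin n) := hab
  exact c.2.some.symm.injective (Subtype.ext h1)

private noncomputable def copyWalk (c : Copies m G) :
    G.Walk (copyHom c ⟨0, Nat.succ_pos m⟩) (copyHom c (Fin.last m)) :=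
  (pathWalk m).map (copyHom c)

private lemma copyWalk_length (c : Copies m G) : (copyWalk c).length = m := by
  rw [copyWalk, Walk.length_map, pathWalk_length]

private lemma copyWalk_toSubgraph (c : Copies m G) : (copyWalk c).toSubgraph = c.1 := by
  rw [copyWalk, Walk.toSubgraph_map, pathWalk_toSubgraph, copyHom,
    Subgraph.map_comp, iso_map_top, map_hom_top]

private noncomputable def copyEnc : Copies m G × Bool →
    (Σ u : Fin n, Σ v : Fin n, {p : G.Walk u v // p.length = m})
  | (c, true) => ⟨_, _, copyWalk c, copyWalk_length c⟩
  | (c, false) => ⟨_, _, (copyWalk c).reverse, by rw [Walk.length_reverse, copyWalk_length]⟩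

private lemma copyEnc_inj (hm : 1 ≤ m) : Function.Injective (copyEnc (m := m) (G := G)) := by
  rintro ⟨c1, b1⟩ ⟨c2, b2⟩ h
  have hsub : c1 = c2 := by
    have h0 := congrArg (fun t : (Σ u : Fin n, Σ v : Fin n, {p : G.Walk u v // p.length = m}) =>
      (t.2.2.1).toSubgraph) h
    apply Subtype.ext
    cases b1 <;> cases b2 <;>
      simp only [copyEnc] at h0 <;>
      simpa only [Walk.toSubgraph_reverse, copyWalk_toSubgraph] using h0
  subst hsub
  have hne : copyHom c1 ⟨0, Nat.succ_pos m⟩ ≠ copyHom c1 (Fin.last m) := by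
    intro hcontra
    have h2 := congrArg Fin.val (copyHom_inj c1 hcontra)
    simp only [Fin.val_last] at h2
    omega
  have hb : b1 = b2 := by
    cases b1 <;> cases b2 <;> first
      | rfl
      | (have h1 := congrArg Sigma.fst h
         simp only [copyEnc] at h1
         first
           | exact absurd h1 hne
           | exact absurd h1.symm hne)
  rw [hb]

private lemma two_mul_copies_le (hm : 1 ≤ m) (G : SimpleGraph (Fin n)) [DecidableRel G.Adj] :
    2 * {c : G.Subgraph | Nonempty (c.coe ≃g pathGraph (m + 1))}.ncard ≤
      ∑ u : Fin n, ∑ v : Fin n, Fintype.card {p : G.Walk u v // p.length = m} := by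
  have hcard := Nat.card_le_card_of_injective _ (copyEnc_inj (G := G) hm)
  rw [Nat.card_prod, Nat.card_eq_fintype_card (α := Bool)] at hcard
  simp only [Fintype.card_bool] at hcard
  have h1 : Nat.card (Copies m G) =
      {c : G.Subgraph | Nonempty (c.coe ≃g pathGraph (m + 1))}.ncard := by
    rw [Set.ncard]
    rfl
  have h2 : Nat.card (Σ u : Fin n, Σ v : Fin n, {p : G.Walk u v // p.length = m}) =
      ∑ u : Fin n, ∑ v : Fin n, Fintype.card {p : G.Walk u v // p.length = m} := by
    rw [Nat.card_eq_fintype_card, Fintype.card_sigma]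
    exact Finset.sum_congr rfl fun u _ => Fintype.card_sigma
  omega


/-- Number of (unlabeled) subgraph copies of `H` in `G`. -/
noncomputable def copyCount {α β : Type*} [Fintype β] (H : SimpleGraph α) (G : SimpleGraph β) : ℕ :=
  {G' : G.Subgraph | Nonempty (G'.coe ≃g H)}.ncard

set_option maxHeartbeats 1000000

/-- If `μ` is the largest eigenvalue of the adjacency matrix of an `n`-vertex graph `G`,
then the number of walks with `l - 1` edges in `G` is at most `μ^(l-1) * n`; consequently,
the number of copies of the path `P_l` in `G` is at most `μ^(l-1) * n / 2`. -/
theorem walks_le_spectralRadius_pow (n l : ℕ) (hl : 2 ≤ l) (G : SimpleGraph (Fin n))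
    [DecidableRel G.Adj] (hA : (G.adjMatrix ℝ).IsHermitian) (μ : ℝ)
    (hmax : ∀ i, hA.eigenvalues i ≤ μ) (hmem : ∃ i, hA.eigenvalues i = μ) :
    ((∑ u : Fin n, ∑ v : Fin n,
        Fintype.card {p : G.Walk u v // p.length = l - 1} : ℕ) : ℝ) ≤ μ ^ (l - 1) * n ∧
      (_root_.copyCount (pathGraph l) G : ℝ) ≤ μ ^ (l - 1) * n / 2 := by
  obtain ⟨m, rfl⟩ : ∃ m, l = m + 1 := ⟨l - 1, by omega⟩
  have hm : 1 ≤ m := by omega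
  simp only [Nat.add_sub_cancel]
  have hpos : ∀ i j, 0 ≤ G.adjMatrix ℝ i j := by
    intro i j
    by_cases h : G.Adj i j <;> simp [SimpleGraph.adjMatrix_apply, h]
  have hcast : ((∑ u : Fin n, ∑ v : Fin n,
      Fintype.card {p : G.Walk u v // p.length = m} : ℕ) : ℝ) =
      ∑ u, ∑ v, ((G.adjMatrix ℝ) ^ m) u v := by
    push_cast
    refine Finset.sum_congr rfl fun u _ => Finset.sum_congr rfl fun v _ => ?_
    rw [SimpleGraph.adjMatrix_pow_apply_eq_card_walk]
    norm_cast
  have part1 : ((∑ u : Fin n, ∑ v : Fin n,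
      Fintype.card {p : G.Walk u v // p.length = m} : ℕ) : ℝ) ≤ μ ^ m * n := by
    rw [hcast]
    exact sum_entries_pow_le _ hA hpos μ hmax m
  refine ⟨part1, ?_⟩
  have h2 := two_mul_copies_le hm G
  have h2' : (2 * _root_.copyCount (pathGraph (m + 1)) G : ℝ) ≤
      ((∑ u : Fin n, ∑ v : Fin n,
        Fintype.card {p : G.Walk u v // p.length = m} : ℕ) : ℝ) := by
    rw [_root_.copyCount]
    exact_mod_cast Nat.cast_le.mpr h2
  linarith
end

section
/- Let F be a graph and k ≥ 2. Suppose G_0 is a complete bipartite graph on n vertices with N(P_{2k}, G_0) = ex(n, P_{2k}, F). Then N(C_{2k}, G_0) = ex(n, C_{2k}, F). -/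
set_option linter.unusedSectionVars false
set_option linter.unusedVariables false

open SimpleGraph Function Set

/-- The generalized Turán number `ex(n, H, F)`. -/
noncomputable def exNum {α γ : Type*} (n : ℕ) (H : SimpleGraph α) (F : SimpleGraph γ) : ℕ :=
  sSup {m | ∃ G : SimpleGraph (Fin n), copyCount F G = 0 ∧ copyCount H G = m}

namespace CBPE

variable {β : Type*}

/-! ### Fin arithmetic helpers -/

lemma fin_sub_val {m : ℕ} (a b : Fin m) :
    ((a - b : Fin m) : ℕ) = if b.val ≤ a.val then a.val - b.val else a.val + m - b.val := by
  have hb := b.isLt; have ha := a.isLt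
  rw [Fin.sub_def]
  simp only
  split_ifs with h
  · have e : m - b.val + a.val = (a.val - b.val) + m := by omega
    rw [e, Nat.add_mod_right, Nat.mod_eq_of_lt (by omega)]
  · rw [Nat.mod_eq_of_lt (by omega)]; omega

lemma fin_val_one {m : ℕ} (hm : 2 ≤ m) [NeZero m] : ((1 : Fin m) : ℕ) = 1 := by
  rw [Fin.val_one']; exact Nat.mod_eq_of_lt (by omega)

lemma fin_neg_one_val {m : ℕ} (hm : 2 ≤ m) [NeZero m] : ((-1 : Fin m) : ℕ) = m - 1 := by
  rw [← zero_sub, fin_sub_val, Fin.val_zero, fin_val_one hm]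
  split_ifs <;> omega

lemma fin_eq_iff_val {m : ℕ} (a b : Fin m) : a = b ↔ a.val = b.val := Fin.ext_iff

/-- Decomposition of cycle adjacency into path adjacency plus the wrap-around edge. -/
lemma cycle_adj_iff {m : ℕ} [NeZero m] (hm : 3 ≤ m) (a b : Fin m) :
    (cycleGraph m).Adj a b ↔
      (pathGraph m).Adj a b ∨ (a = 0 ∧ b = -1) ∨ (a = -1 ∧ b = 0) := by
  have ha := a.isLt; have hb := b.isLt
  rw [cycleGraph_adj', pathGraph_adj, fin_sub_val, fin_sub_val,
    fin_eq_iff_val a 0, fin_eq_iff_val b 0, fin_eq_iff_val a (-1), fin_eq_iff_val b (-1),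
    fin_neg_one_val (by omega), Fin.val_zero]
  split_ifs with h1 h2 h2 <;> omega

lemma cycle_adj_add {m : ℕ} [NeZero m] (a b r : Fin m) :
    (cycleGraph m).Adj (a + r) (b + r) ↔ (cycleGraph m).Adj a b := by
  rw [cycleGraph_adj', cycleGraph_adj', add_sub_add_right_eq_sub, add_sub_add_right_eq_sub]

lemma cycle_adj_sub_one {m : ℕ} [NeZero m] (hm : 2 ≤ m) (r : Fin m) :
    (cycleGraph m).Adj r (r - 1) := by
  rw [cycleGraph_adj']
  left
  rw [sub_sub_cancel, fin_val_one hm]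

lemma not_path_adj_zero_neg_one {m : ℕ} [NeZero m] (hm : 3 ≤ m) :
    ¬ (pathGraph m).Adj (0 : Fin m) (-1) := by
  rw [pathGraph_adj, Fin.val_zero, fin_neg_one_val (by omega)]
  omega

end CBPE

namespace CBPE
variable {β : Type*}

/-! ### Image subgraphs -/

/-- The subgraph of `G` that is the image of a map `f : Fin m → β` viewed as carrying
the edges of a template graph `H`. -/
def imgSub (G : SimpleGraph β) {m : ℕ} (H : SimpleGraph (Fin m)) (f : Fin m → β) :
    G.Subgraph where
  verts := Set.range f
  Adj x y := G.Adj x y ∧ ∃ a b, H.Adj a b ∧ f a = x ∧ f b = y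
  adj_sub h := h.1
  edge_vert h := by obtain ⟨-, a, b, -, rfl, -⟩ := h; exact ⟨a, rfl⟩
  symm := ⟨fun x y h => by obtain ⟨hG, a, b, hab, rfl, rfl⟩ := h; exact ⟨hG.symm, b, a, hab.symm, rfl, rfl⟩⟩

/-- `f` maps `H`-edges to `G`-edges. -/
def IsHomOn (G : SimpleGraph β) {m : ℕ} (H : SimpleGraph (Fin m)) (f : Fin m → β) : Prop :=
  ∀ a b, H.Adj a b → G.Adj (f a) (f b)

variable {G : SimpleGraph β} {m : ℕ} {H : SimpleGraph (Fin m)} {f : Fin m → β}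

lemma imgSub_verts : (imgSub G H f).verts = Set.range f := rfl

lemma imgSub_adj {x y : β} :
    (imgSub G H f).Adj x y ↔ G.Adj x y ∧ ∃ a b, H.Adj a b ∧ f a = x ∧ f b = y := Iff.rfl

lemma imgSub_adj_of_hom (hf : IsHomOn G H f) {x y : β} :
    (imgSub G H f).Adj x y ↔ ∃ a b, H.Adj a b ∧ f a = x ∧ f b = y := by
  rw [imgSub_adj, and_iff_right_iff_imp]
  rintro ⟨a, b, hab, rfl, rfl⟩
  exact hf a b hab

lemma imgSub_coe_iso (hinj : Injective f) (hf : IsHomOn G H f) :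
    Nonempty ((imgSub G H f).coe ≃g H) := by
  have hbij : Function.Bijective (fun i : Fin m => (⟨f i, ⟨i, rfl⟩⟩ : (imgSub G H f).verts)) := by
    constructor
    · intro i j h
      exact hinj (congrArg Subtype.val h)
    · rintro ⟨x, i, rfl⟩
      exact ⟨i, rfl⟩
  refine ⟨(⟨Equiv.ofBijective _ hbij, ?_⟩ : H ≃g (imgSub G H f).coe).symm⟩
  intro a b
  simp only [Equiv.ofBijective_apply, Subgraph.coe_adj]
  constructor
  · rintro ⟨hG, a', b', hab, ha, hb⟩
    rwa [hinj ha, hinj hb] at hab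
  · intro h
    exact ⟨hf a b h, a, b, h, rfl, rfl⟩

lemma eq_imgSub_of_iso {G' : G.Subgraph} (e : G'.coe ≃g H) :
    ∃ f : Fin m → β, Injective f ∧ IsHomOn G H f ∧ G' = imgSub G H f := by
  refine ⟨fun i => ((e.symm i : G'.verts) : β), ?_, ?_, ?_⟩
  · exact fun i j h => e.symm.toEquiv.injective (Subtype.ext h)
  · intro a b hab
    exact G'.adj_sub ((Subgraph.coe_adj _ _ _).mp (e.symm.map_rel_iff.mpr hab))
  · apply Subgraph.ext
    · ext x
      constructor
      · intro hx
        exact ⟨e ⟨x, hx⟩, by simp⟩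
      · rintro ⟨i, rfl⟩
        exact (e.symm i).2
    · funext x y
      apply propext
      constructor
      · intro h
        have hx : x ∈ G'.verts := G'.edge_vert h
        have hy : y ∈ G'.verts := G'.edge_vert h.symm
        refine ⟨G'.adj_sub h, e ⟨x, hx⟩, e ⟨y, hy⟩, ?_, by simp, by simp⟩
        exact e.map_rel_iff.mpr ((Subgraph.coe_adj _ _ _).mpr h)
      · rintro ⟨hG, a, b, hab, rfl, rfl⟩
        exact (Subgraph.coe_adj _ _ _).mp (e.symm.map_rel_iff.mpr hab)

/-- The set of copies of `H` in `G` (as in `copyCount`). -/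
lemma mem_copies_iff {G' : G.Subgraph} :
    G' ∈ {G' : G.Subgraph | Nonempty (G'.coe ≃g H)} ↔
      ∃ f : Fin m → β, Injective f ∧ IsHomOn G H f ∧ G' = imgSub G H f := by
  constructor
  · rintro ⟨e⟩
    exact eq_imgSub_of_iso e
  · rintro ⟨f, hinj, hf, rfl⟩
    exact imgSub_coe_iso hinj hf

end CBPE

namespace CBPE
variable {β : Type*} {G : SimpleGraph β} {m : ℕ} [NeZero m]

/-- Rotation of an indexing function. -/
def rotf (f : Fin m → β) (r : Fin m) : Fin m → β := fun i => f (i + r)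

lemma rotf_injective {f : Fin m → β} (hinj : Injective f) (r : Fin m) :
    Injective (rotf f r) := fun i j h => by
  have := hinj h
  exact add_right_cancel this

lemma rotf_range {f : Fin m → β} (r : Fin m) : Set.range (rotf f r) = Set.range f := by
  ext x
  constructor
  · rintro ⟨i, rfl⟩; exact ⟨i + r, rfl⟩
  · rintro ⟨i, rfl⟩; exact ⟨i - r, by simp [rotf]⟩

lemma rotf_cycle_hom {f : Fin m → β} (hf : IsHomOn G (cycleGraph m) f) (r : Fin m) :
    IsHomOn G (cycleGraph m) (rotf f r) := by
  intro a b hab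
  exact hf _ _ ((cycle_adj_add a b r).mpr hab)

lemma rotf_path_hom (hm : 3 ≤ m) {f : Fin m → β} (hf : IsHomOn G (cycleGraph m) f) (r : Fin m) :
    IsHomOn G (pathGraph m) (rotf f r) := by
  intro a b hab
  exact rotf_cycle_hom hf r a b (pathGraph_le_cycleGraph hab)

lemma imgSub_cycle_rotf {f : Fin m → β} (r : Fin m) :
    imgSub G (cycleGraph m) (rotf f r) = imgSub G (cycleGraph m) f := by
  apply Subgraph.ext
  · exact rotf_range r
  · funext x y
    apply propext
    simp only [imgSub_adj, rotf]
    refine and_congr_right fun _ => ⟨?_, ?_⟩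
    · rintro ⟨a, b, hab, rfl, rfl⟩
      exact ⟨a + r, b + r, (cycle_adj_add a b r).mpr hab, rfl, rfl⟩
    · rintro ⟨a, b, hab, rfl, rfl⟩
      refine ⟨a - r, b - r, ?_, by simp, by simp⟩
      exact (cycle_adj_add _ _ r).mp (by simpa [sub_add_cancel] using hab)

/-- The endpoints of a path copy: the vertices with a unique neighbor. -/
lemma path_endpoints (hm : 3 ≤ m) {f : Fin m → β} (hinj : Injective f)
    (hf : IsHomOn G (pathGraph m) f) :
    {x | ∃! y, (imgSub G (pathGraph m) f).Adj x y} = {f 0, f (-1)} := by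
  have h0 : ((0 : Fin m) : ℕ) = 0 := Fin.val_zero m
  have h1 : ((1 : Fin m) : ℕ) = 1 := fin_val_one (by omega)
  have hlast : ((-1 : Fin m) : ℕ) = m - 1 := fin_neg_one_val (by omega)
  ext x
  simp only [Set.mem_setOf_eq, Set.mem_insert_iff, Set.mem_singleton_iff]
  constructor
  · rintro ⟨y, hy, huniq⟩
    obtain ⟨a, b, hab, rfl, rfl⟩ := (imgSub_adj_of_hom hf).mp hy
    by_contra hcon
    push_neg at hcon
    obtain ⟨hne0, hnelast⟩ := hcon
    have halt := a.isLt
    have ha0 : a.val ≠ 0 := fun h => hne0 (congrArg f (Fin.ext (by rw [h, h0])))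
    have halast : a.val ≠ m - 1 := fun h => hnelast (congrArg f (Fin.ext (by rw [h, hlast])))
    set b1 : Fin m := ⟨a.val - 1, by omega⟩ with hb1
    set b2 : Fin m := ⟨a.val + 1, by omega⟩ with hb2
    have hadj1 : (pathGraph m).Adj a b1 := by
      rw [pathGraph_adj]; right; show b1.val + 1 = a.val; rw [hb1]; simp; omega
    have hadj2 : (pathGraph m).Adj a b2 := by
      rw [pathGraph_adj]; left; rfl
    have h1' : f b1 = f b := huniq (f b1) ((imgSub_adj_of_hom hf).mpr ⟨a, b1, hadj1, rfl, rfl⟩)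
    have h2' : f b2 = f b := huniq (f b2) ((imgSub_adj_of_hom hf).mpr ⟨a, b2, hadj2, rfl, rfl⟩)
    have hbb : b1 = b2 := hinj (h1'.trans h2'.symm)
    have v1 : (b1 : ℕ) = a.val - 1 := by rw [hb1]
    have v2 : (b2 : ℕ) = a.val + 1 := by rw [hb2]
    have := congrArg Fin.val hbb
    omega
  · intro h
    rcases h with rfl | rfl
    · refine ⟨f 1, (imgSub_adj_of_hom hf).mpr ⟨0, 1, ?_, rfl, rfl⟩, ?_⟩
      · rw [pathGraph_adj]; left; rw [h0, h1]
      · rintro y hy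
        obtain ⟨a, b, hab, ha, rfl⟩ := (imgSub_adj_of_hom hf).mp hy
        have haa : a = 0 := hinj ha
        subst haa
        rw [pathGraph_adj, h0] at hab
        have hbv := b.isLt
        have hb : b = 1 := Fin.ext (by omega)
        rw [hb]
    · have hm2 : m - 2 < m := by omega
      refine ⟨f ⟨m - 2, hm2⟩, (imgSub_adj_of_hom hf).mpr ⟨-1, ⟨m - 2, hm2⟩, ?_, rfl, rfl⟩, ?_⟩
      · rw [pathGraph_adj]; right; show m - 2 + 1 = _; rw [hlast]; omega
      · rintro y hy
        obtain ⟨a, b, hab, ha, rfl⟩ := (imgSub_adj_of_hom hf).mp hy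
        have haa : a = -1 := hinj ha
        subst haa
        rw [pathGraph_adj, hlast] at hab
        have hbv := b.isLt
        have hb : b = ⟨m - 2, hm2⟩ := Fin.ext (by simp; omega)
        rw [hb]

end CBPE

namespace CBPE
variable {β : Type*} {G : SimpleGraph β} {m : ℕ} [NeZero m]

/-- A path copy in a host graph extends to at most one cycle copy: the cycle template
is determined by the path template. -/
lemma cyc_eq_of_path_eq (hm : 4 ≤ m) {f g : Fin m → β}
    (hfi : Injective f) (hgi : Injective g)
    (hf : IsHomOn G (cycleGraph m) f) (hg : IsHomOn G (cycleGraph m) g)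
    (hpq : imgSub G (pathGraph m) f = imgSub G (pathGraph m) g) :
    imgSub G (cycleGraph m) f = imgSub G (cycleGraph m) g := by
  have hf' : IsHomOn G (pathGraph m) f := fun a b h => hf a b (pathGraph_le_cycleGraph h)
  have hg' : IsHomOn G (pathGraph m) g := fun a b h => hg a b (pathGraph_le_cycleGraph h)
  have hep : ({f 0, f (-1)} : Set β) = {g 0, g (-1)} := by
    rw [← path_endpoints (by omega) hfi hf', ← path_endpoints (by omega) hgi hg', hpq]
  rw [Set.pair_eq_pair_iff] at hep
  have hverts : Set.range f = Set.range g := congrArg Subgraph.verts hpq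
  have hAdj : ∀ x y, (imgSub G (pathGraph m) f).Adj x y ↔ (imgSub G (pathGraph m) g).Adj x y :=
    fun x y => by rw [hpq]
  apply Subgraph.ext
  · exact hverts
  · funext x y
    apply propext
    have decomp : ∀ (h : Fin m → β), IsHomOn G (cycleGraph m) h →
        ∀ x y, ((imgSub G (cycleGraph m) h).Adj x y ↔
          (imgSub G (pathGraph m) h).Adj x y ∨
            ((x = h 0 ∧ y = h (-1)) ∨ (x = h (-1) ∧ y = h 0))) := by
      intro h hh x y
      have hh' : IsHomOn G (pathGraph m) h := fun a b hab =>
        hh a b (pathGraph_le_cycleGraph hab)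
      rw [imgSub_adj_of_hom hh, imgSub_adj_of_hom hh']
      constructor
      · rintro ⟨a, b, hab, rfl, rfl⟩
        rw [cycle_adj_iff (by omega)] at hab
        rcases hab with hab | ⟨rfl, rfl⟩ | ⟨rfl, rfl⟩
        · exact Or.inl ⟨a, b, hab, rfl, rfl⟩
        · exact Or.inr (Or.inl ⟨rfl, rfl⟩)
        · exact Or.inr (Or.inr ⟨rfl, rfl⟩)
      · rintro (⟨a, b, hab, rfl, rfl⟩ | ⟨rfl, rfl⟩ | ⟨rfl, rfl⟩)
        · exact ⟨a, b, pathGraph_le_cycleGraph hab, rfl, rfl⟩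
        · exact ⟨0, -1, (cycle_adj_iff (by omega) _ _).mpr (Or.inr (Or.inl ⟨rfl, rfl⟩)), rfl, rfl⟩
        · exact ⟨-1, 0, (cycle_adj_iff (by omega) _ _).mpr (Or.inr (Or.inr ⟨rfl, rfl⟩)), rfl, rfl⟩
    rw [decomp f hf x y, decomp g hg x y, hAdj x y]
    rcases hep with ⟨h1, h2⟩ | ⟨h1, h2⟩ <;> rw [h1, h2] <;> tauto

/-- Deleting the edge `{f r, f (r-1)}` from a cycle copy gives the rotated path copy. -/
lemma cyc_deleteEdge_eq (hm : 4 ≤ m) {f : Fin m → β} (hinj : Injective f)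
    (hf : IsHomOn G (cycleGraph m) f) (r : Fin m) :
    (imgSub G (cycleGraph m) f).deleteEdges {s(f r, f (r - 1))} =
      imgSub G (pathGraph m) (rotf f r) := by
  apply Subgraph.ext
  · rw [Subgraph.deleteEdges_verts, imgSub_verts, imgSub_verts, rotf_range]
  · funext x y
    apply propext
    have hrp : IsHomOn G (pathGraph m) (rotf f r) := rotf_path_hom (by omega) hf r
    rw [Subgraph.deleteEdges_adj, imgSub_adj_of_hom hf, imgSub_adj_of_hom hrp]
    constructor
    · rintro ⟨⟨a, b, hab, rfl, rfl⟩, hne⟩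
      simp only [Set.mem_singleton_iff] at hne
      have hab' : (cycleGraph m).Adj (a - r) (b - r) :=
        (cycle_adj_add _ _ r).mp (by simpa [sub_add_cancel] using hab)
      rw [cycle_adj_iff (by omega)] at hab'
      rcases hab' with h | ⟨h1, h2⟩ | ⟨h1, h2⟩
      · exact ⟨a - r, b - r, h, by simp [rotf, sub_add_cancel], by simp [rotf, sub_add_cancel]⟩
      · exfalso
        apply hne
        have ha : a = r := by
          have := sub_eq_zero.mp h1
          rwa [sub_eq_zero] at h1
        have hb : b = r - 1 := by
          have := sub_eq_iff_eq_add.mp h2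
          rw [this, neg_add_eq_sub]
        rw [ha, hb]
      · exfalso
        apply hne
        have ha : a = r - 1 := by
          have := sub_eq_iff_eq_add.mp h1
          rw [this, neg_add_eq_sub]
        have hb : b = r := by rwa [sub_eq_zero] at h2
        rw [ha, hb, Sym2.eq_swap]
    · rintro ⟨a, b, hab, rfl, rfl⟩
      constructor
      · exact ⟨a + r, b + r, (cycle_adj_add a b r).mpr (pathGraph_le_cycleGraph hab),
          rfl, rfl⟩
      · simp only [Set.mem_singleton_iff]
        intro hcon
        rw [Sym2.eq_iff] at hcon
        simp only [rotf] at hcon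
        rcases hcon with ⟨h1, h2⟩ | ⟨h1, h2⟩
        · have ha : a = 0 := by
            have h1' : a + r = 0 + r := by rw [zero_add]; exact hinj h1
            exact add_right_cancel h1'
          have hb : b = -1 := by
            have h2' : b + r = -1 + r := by rw [neg_add_eq_sub]; exact hinj h2
            exact add_right_cancel h2'
          rw [ha, hb] at hab
          exact not_path_adj_zero_neg_one (by omega) hab
        · have ha : a = -1 := by
            have h1' : a + r = -1 + r := by rw [neg_add_eq_sub]; exact hinj h1
            exact add_right_cancel h1'
          have hb : b = 0 := by
            have h2' : b + r = 0 + r := by rw [zero_add]; exact hinj h2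
            exact add_right_cancel h2'
          rw [ha, hb] at hab
          exact not_path_adj_zero_neg_one (by omega) hab.symm

end CBPE

namespace CBPE
variable {β : Type*} {G : SimpleGraph β} {m : ℕ} [NeZero m]

lemma cyc_edgeSet_eq (hm : 4 ≤ m) {f : Fin m → β}
    (hf : IsHomOn G (cycleGraph m) f) :
    (imgSub G (cycleGraph m) f).edgeSet = Set.range (fun r : Fin m => s(f r, f (r - 1))) := by
  ext e
  induction e with
  | _ x y =>
    rw [Subgraph.mem_edgeSet, imgSub_adj_of_hom hf]
    constructor
    · rintro ⟨a, b, hab, rfl, rfl⟩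
      rw [cycleGraph_adj'] at hab
      have h1 : ((1 : Fin m) : ℕ) = 1 := fin_val_one (by omega)
      rcases hab with h | h
      · have hab' : a - b = 1 := Fin.ext (by rw [h, h1])
        have hb : b = a - 1 := by
          rw [eq_sub_iff_add_eq, ← eq_sub_iff_add_eq']
          exact hab'.symm
        exact ⟨a, by rw [hb]⟩
      · have hab' : b - a = 1 := Fin.ext (by rw [h, h1])
        have ha : a = b - 1 := by
          rw [eq_sub_iff_add_eq, ← eq_sub_iff_add_eq']
          exact hab'.symm
        exact ⟨b, by rw [ha, Sym2.eq_swap]⟩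
    · rintro ⟨r, hr⟩
      simp only at hr
      rw [Sym2.eq_iff] at hr
      rcases hr with ⟨rfl, rfl⟩ | ⟨rfl, rfl⟩
      · exact ⟨r, r - 1, cycle_adj_sub_one (by omega) r, rfl, rfl⟩
      · exact ⟨r - 1, r, (cycle_adj_sub_one (by omega) r).symm, rfl, rfl⟩

lemma cyc_edge_injective (hm : 4 ≤ m) {f : Fin m → β} (hinj : Injective f) :
    Injective (fun r : Fin m => s(f r, f (r - 1))) := by
  intro r s h
  simp only [Sym2.eq_iff] at h
  rcases h with ⟨h1, h2⟩ | ⟨h1, h2⟩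
  · exact hinj h1
  · exfalso
    have hr : r = s - 1 := hinj h1
    have hs : s = r - 1 := (hinj h2).symm
    rw [hs] at hr
    have hv := congrArg Fin.val hr
    rw [fin_sub_val, fin_sub_val, fin_val_one (by omega)] at hv
    have := r.isLt
    split_ifs at hv <;> omega

lemma deleteEdges_injOn (C' : G.Subgraph) :
    Set.InjOn (fun e => C'.deleteEdges {e}) C'.edgeSet := by
  intro e1 he1 e2 he2 h
  by_contra hne
  have h' : C'.deleteEdges {e1} = C'.deleteEdges {e2} := h
  revert he2 hne h'
  induction e2 using Sym2.ind with
  | _ x y =>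
    intro he2 hne h'
    have h2 : C'.Adj x y := Subgraph.mem_edgeSet.mp he2
    have hmem1 : (C'.deleteEdges {e1}).Adj x y :=
      (Subgraph.deleteEdges_adj _ _ _).mpr ⟨h2, by simpa using fun hc => hne hc.symm⟩
    rw [h'] at hmem1
    exact ((Subgraph.deleteEdges_adj _ _ _).mp hmem1).2 rfl

end CBPE

namespace CBPE
variable {β : Type*} {G : SimpleGraph β} {m : ℕ} [NeZero m]

lemma path_hom_to_cycle_hom (hm : 4 ≤ m) (hme : m % 2 = 0) {c : β → Bool}
    (hc : ∀ x y, G.Adj x y ↔ c x ≠ c y) {f : Fin m → β}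
    (hf : IsHomOn G (pathGraph m) f) : IsHomOn G (cycleGraph m) f := by
  have key : ∀ j (h : j < m), (c (f ⟨j, h⟩) = c (f ⟨0, by omega⟩)) ↔ j % 2 = 0 := by
    intro j
    induction j with
    | zero => intro h; simp
    | succ i ih =>
      intro h
      have hi : i < m := by omega
      have hadj : (pathGraph m).Adj ⟨i, hi⟩ ⟨i + 1, h⟩ := by rw [pathGraph_adj]; left; rfl
      have hne : c (f ⟨i, hi⟩) ≠ c (f ⟨i + 1, h⟩) := (hc _ _).mp (hf _ _ hadj)
      have h2 : (i + 1) % 2 = 0 ↔ ¬ (i % 2 = 0) := by omega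
      rw [h2, ← ih hi]
      cases hb1 : c (f ⟨i + 1, h⟩) <;> cases hb2 : c (f ⟨i, hi⟩) <;>
        cases hb0 : c (f ⟨0, by omega⟩) <;> simp_all
  have e0 : (0 : Fin m) = ⟨0, by omega⟩ := Fin.ext (Fin.val_zero m)
  have elast : (-1 : Fin m) = ⟨m - 1, by omega⟩ := Fin.ext (fin_neg_one_val (by omega))
  have hmain : G.Adj (f 0) (f (-1)) := by
    rw [hc, e0, elast]
    intro hcc
    have := (key (m - 1) (by omega)).mp hcc.symm
    omega
  intro a b hab
  rw [cycle_adj_iff (by omega)] at hab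
  rcases hab with h | ⟨rfl, rfl⟩ | ⟨rfl, rfl⟩
  · exact hf _ _ h
  · exact hmain
  · exact hmain.symm

lemma subgraph_finite (G : SimpleGraph β) [Finite β] : Finite G.Subgraph :=
  Finite.of_injective (fun G' => (G'.verts, G'.Adj))
    (fun a b h => Subgraph.ext (congrArg Prod.fst h) (congrArg Prod.snd h))

theorem mul_copyCount_le [Fintype β] (hm : 4 ≤ m) (G : SimpleGraph β) :
    m * _root_.copyCount (cycleGraph m) G ≤ _root_.copyCount (pathGraph m) G := by
  classical
  haveI : Finite G.Subgraph := subgraph_finite G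
  set SC := {G' : G.Subgraph | Nonempty (G'.coe ≃g cycleGraph m)} with hSC
  set SP := {G' : G.Subgraph | Nonempty (G'.coe ≃g pathGraph m)} with hSP
  choose rep hrepinj hrephom hrepeq using (fun C : SC => mem_copies_iff.mp C.2)
  have hΦmem : ∀ (C : SC) (r : Fin m), imgSub G (pathGraph m) (rotf (rep C) r) ∈ SP :=
    fun C r => mem_copies_iff.mpr ⟨rotf (rep C) r, rotf_injective (hrepinj C) r,
      rotf_path_hom (by omega) (hrephom C) r, rfl⟩
  have hΦinj : Injective (fun p : SC × Fin m =>
      (⟨imgSub G (pathGraph m) (rotf (rep p.1) p.2), hΦmem p.1 p.2⟩ : SP)) := by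
    rintro ⟨C₁, r₁⟩ ⟨C₂, r₂⟩ h
    have h' : imgSub G (pathGraph m) (rotf (rep C₁) r₁) =
        imgSub G (pathGraph m) (rotf (rep C₂) r₂) := congrArg Subtype.val h
    have hcyc : imgSub G (cycleGraph m) (rotf (rep C₁) r₁) =
        imgSub G (cycleGraph m) (rotf (rep C₂) r₂) :=
      cyc_eq_of_path_eq hm (rotf_injective (hrepinj C₁) r₁) (rotf_injective (hrepinj C₂) r₂)
        (rotf_cycle_hom (hrephom C₁) r₁) (rotf_cycle_hom (hrephom C₂) r₂) h'
    rw [imgSub_cycle_rotf, imgSub_cycle_rotf, ← hrepeq C₁, ← hrepeq C₂] at hcyc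
    have hCC : C₁ = C₂ := Subtype.ext hcyc
    subst hCC
    have hep := congrArg (fun S : G.Subgraph => {x | ∃! y, S.Adj x y}) h'
    simp only [path_endpoints (show (3:ℕ) ≤ m by omega) (rotf_injective (hrepinj C₁) r₁)
        (rotf_path_hom (by omega) (hrephom C₁) r₁),
      path_endpoints (show (3:ℕ) ≤ m by omega) (rotf_injective (hrepinj C₁) r₂)
        (rotf_path_hom (by omega) (hrephom C₁) r₂)] at hep
    simp only [rotf] at hep
    rw [Set.pair_eq_pair_iff] at hep
    have hr : r₁ = r₂ := by
      rcases hep with ⟨h1, h2⟩ | ⟨h1, h2⟩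
      · have := hrepinj C₁ h1
        simpa using this
      · exfalso
        have e1 : (0 : Fin m) + r₁ = -1 + r₂ := hrepinj C₁ h1
        have e2 : (-1 : Fin m) + r₁ = 0 + r₂ := hrepinj C₁ h2
        rw [zero_add] at e1 e2
        rw [e1, ← add_assoc] at e2
        have e3 : (-1 : Fin m) + -1 + r₂ = 0 + r₂ := by rw [zero_add]; exact e2
        have e4 : (-1 : Fin m) + -1 = 0 := add_right_cancel e3
        have e5 := congrArg Fin.val e4
        rw [Fin.val_add, fin_neg_one_val (show (2:ℕ) ≤ m by omega), Fin.val_zero] at e5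
        have e6 : m - 1 + (m - 1) = (m - 2) + m := by omega
        rw [e6, Nat.add_mod_right, Nat.mod_eq_of_lt (by omega)] at e5
        omega
    rw [hr]
  calc m * _root_.copyCount (cycleGraph m) G = Nat.card (↥SC × Fin m) := by
        rw [Nat.card_prod, Nat.card_eq_fintype_card (α := Fin m), Fintype.card_fin,
          Nat.card_coe_set_eq]
        exact (Nat.mul_comm _ _)
    _ ≤ Nat.card ↥SP := Nat.card_le_card_of_injective _ hΦinj
    _ = _root_.copyCount (pathGraph m) G := Nat.card_coe_set_eq _

end CBPE

namespace CBPE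
variable {β : Type*} {m : ℕ} [NeZero m]

theorem copyCount_le_mul [Fintype β] (hm : 4 ≤ m) (hme : m % 2 = 0) (G : SimpleGraph β)
    {c : β → Bool} (hc : ∀ x y, G.Adj x y ↔ c x ≠ c y) :
    _root_.copyCount (pathGraph m) G ≤ m * _root_.copyCount (cycleGraph m) G := by
  classical
  haveI : Finite G.Subgraph := subgraph_finite G
  set SC := {G' : G.Subgraph | Nonempty (G'.coe ≃g cycleGraph m)} with hSC
  set SP := {G' : G.Subgraph | Nonempty (G'.coe ≃g pathGraph m)} with hSP
  choose rep hrepinj hrephom hrepeq using (fun C : SC => mem_copies_iff.mp C.2)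
  choose prep hprepinj hprephom hprepeq using (fun P : SP => mem_copies_iff.mp P.2)
  have hcyc : ∀ P : ↥SP, IsHomOn G (cycleGraph m) (prep P) := fun P =>
    path_hom_to_cycle_hom hm hme hc (hprephom P)
  have hCmem : ∀ P : ↥SP, imgSub G (cycleGraph m) (prep P) ∈ SC := fun P =>
    mem_copies_iff.mpr ⟨_, hprepinj P, hcyc P, rfl⟩
  have hrindex : ∀ P : ↥SP, ∃ r : Fin m,
      s(rep ⟨_, hCmem P⟩ r, rep ⟨_, hCmem P⟩ (r - 1)) = s(prep P 0, prep P (-1)) := by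
    intro P
    have h1 : s(prep P 0, prep P (-1)) ∈ (imgSub G (cycleGraph m) (prep P)).edgeSet := by
      rw [cyc_edgeSet_eq hm (hcyc P)]
      exact ⟨0, by simp only []; rw [zero_sub]⟩
    have h2 : imgSub G (cycleGraph m) (prep P) =
        imgSub G (cycleGraph m) (rep ⟨_, hCmem P⟩) := hrepeq ⟨_, hCmem P⟩
    rw [h2, cyc_edgeSet_eq hm (hrephom ⟨_, hCmem P⟩)] at h1
    obtain ⟨r, hr⟩ := h1
    exact ⟨r, hr⟩
  choose rΨ hrΨ using hrindex
  have key : ∀ P : ↥SP, (P : G.Subgraph) =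
      (imgSub G (cycleGraph m) (prep P)).deleteEdges
        {s(rep ⟨_, hCmem P⟩ (rΨ P), rep ⟨_, hCmem P⟩ (rΨ P - 1))} := by
    intro P
    rw [hrΨ P]
    have hd := cyc_deleteEdge_eq hm (hprepinj P) (hcyc P) 0
    rw [zero_sub] at hd
    rw [hd]
    have hrot : rotf (prep P) 0 = prep P := funext fun i => by simp [rotf]
    rw [hrot, ← hprepeq P]
  have hΨinj : Injective (fun P : ↥SP =>
      ((⟨imgSub G (cycleGraph m) (prep P), hCmem P⟩ : SC), rΨ P)) := by
    intro P₁ P₂ h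
    have h1 : (⟨imgSub G (cycleGraph m) (prep P₁), hCmem P₁⟩ : SC) =
        ⟨imgSub G (cycleGraph m) (prep P₂), hCmem P₂⟩ := congrArg Prod.fst h
    have h2 : rΨ P₁ = rΨ P₂ := congrArg Prod.snd h
    apply Subtype.ext
    rw [key P₁, key P₂]
    have h1' : imgSub G (cycleGraph m) (prep P₁) = imgSub G (cycleGraph m) (prep P₂) :=
      congrArg Subtype.val h1
    rw [h2, h1, h1']
  calc _root_.copyCount (pathGraph m) G = Nat.card ↥SP := (Nat.card_coe_set_eq _).symm
    _ ≤ Nat.card (↥SC × Fin m) := Nat.card_le_card_of_injective _ hΨinj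
    _ = m * _root_.copyCount (cycleGraph m) G := by
        rw [Nat.card_prod, Nat.card_eq_fintype_card (α := Fin m), Fintype.card_fin,
          Nat.card_coe_set_eq]
        exact Nat.mul_comm _ _

end CBPE

namespace CBPE

lemma copyCount_le_bound {α : Type*} {n : ℕ} (H : SimpleGraph α) (G : SimpleGraph (Fin n)) :
    copyCount H G ≤ Nat.card (Set (Fin n) × (Fin n → Fin n → Prop)) := by
  haveI : Finite G.Subgraph := subgraph_finite G
  have h1 : copyCount H G ≤ Nat.card G.Subgraph := by
    rw [_root_.copyCount, ← Set.ncard_univ]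
    exact Set.ncard_le_ncard (Set.subset_univ _) Set.finite_univ
  exact h1.trans (Nat.card_le_card_of_injective (fun G' => (G'.verts, G'.Adj))
    (fun a b h => Subgraph.ext (congrArg Prod.fst h) (congrArg Prod.snd h)))

end CBPE

open CBPE

/-- If `G₀` is an `F`-free complete bipartite graph on `n` vertices maximizing the number
of copies of `P_{2k}`, i.e. `N(P_{2k}, G₀) = ex(n, P_{2k}, F)`, then `G₀` also maximizes
the number of copies of `C_{2k}`: `N(C_{2k}, G₀) = ex(n, C_{2k}, F)`. -/
theorem completeBipartite_path_extremal_implies_cycle_extremal {γ : Type*}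
    (F : SimpleGraph γ) (k : ℕ) (hk : 2 ≤ k) (n : ℕ) (G₀ : SimpleGraph (Fin n))
    (hbip : ∃ a b : ℕ, a + b = n ∧
      Nonempty (G₀ ≃g completeBipartiteGraph (Fin a) (Fin b)))
    (hfree : copyCount F G₀ = 0)
    (hmax : _root_.copyCount (pathGraph (2 * k)) G₀ = exNum n (pathGraph (2 * k)) F) :
    _root_.copyCount (cycleGraph (2 * k)) G₀ = exNum n (cycleGraph (2 * k)) F := by
  have hk4 : 4 ≤ 2 * k := by omega
  haveI : NeZero (2 * k) := ⟨by omega⟩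
  obtain ⟨a, b, hab, ⟨e⟩⟩ := hbip
  have hc : ∀ x y, G₀.Adj x y ↔ (fun v => (e v).isRight) x ≠ (fun v => (e v).isRight) y := by
    intro x y
    rw [← e.map_rel_iff]
    cases hx : e x <;> cases hy : e y <;> simp [hx, hy]
  have heq : _root_.copyCount (pathGraph (2 * k)) G₀ = 2 * k * _root_.copyCount (cycleGraph (2 * k)) G₀ :=
    le_antisymm (copyCount_le_mul hk4 (by omega) G₀ hc) (mul_copyCount_le hk4 G₀)
  have hbddC : BddAbove {m | ∃ G : SimpleGraph (Fin n),
      copyCount F G = 0 ∧ _root_.copyCount (cycleGraph (2 * k)) G = m} := by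
    refine ⟨Nat.card (Set (Fin n) × (Fin n → Fin n → Prop)), ?_⟩
    rintro x ⟨G, -, rfl⟩
    exact copyCount_le_bound _ G
  have hbddP : BddAbove {m | ∃ G : SimpleGraph (Fin n),
      copyCount F G = 0 ∧ _root_.copyCount (pathGraph (2 * k)) G = m} := by
    refine ⟨Nat.card (Set (Fin n) × (Fin n → Fin n → Prop)), ?_⟩
    rintro x ⟨G, -, rfl⟩
    exact copyCount_le_bound _ G
  have hmemC : _root_.copyCount (cycleGraph (2 * k)) G₀ ∈ {m | ∃ G : SimpleGraph (Fin n),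
      copyCount F G = 0 ∧ _root_.copyCount (cycleGraph (2 * k)) G = m} := ⟨G₀, hfree, rfl⟩
  unfold exNum
  apply le_antisymm
  · exact le_csSup hbddC hmemC
  · apply csSup_le ⟨_, hmemC⟩
    rintro x ⟨G, hGfree, rfl⟩
    have h1 : 2 * k * _root_.copyCount (cycleGraph (2 * k)) G ≤ _root_.copyCount (pathGraph (2 * k)) G :=
      mul_copyCount_le hk4 G
    have h2 : _root_.copyCount (pathGraph (2 * k)) G ≤ exNum n (pathGraph (2 * k)) F :=
      le_csSup hbddP ⟨G, hGfree, rfl⟩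
    rw [← hmax, heq] at h2
    exact Nat.le_of_mul_le_mul_left (h1.trans h2) (by omega)
end

section
/- Let G be a C_5-free graph on n vertices and uv an edge of G not contained in any triangle. Then the number of copies of P_4 in G containing the edge uv is at most 2·e' + |B|·|C|, where e' is the number of edges of G − {u,v}, B is the set of vertices adjacent to u but not v, and C is the set of vertices adjacent to v but not u. -/
open SimpleGraph

/-- Number of copies of `H` in `G` containing the edge `uv`. -/
noncomputable def copyCountThrough {α β : Type*} [Fintype β] (H : SimpleGraph α)
    (G : SimpleGraph β) (u v : β) : ℕ :=
  {G' : G.Subgraph | Nonempty (G'.coe ≃g H) ∧ G'.Adj u v}.ncard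

private lemma P4Aux.sym2_cases {α : Type*} (f : Fin 4 → α) (i j : Fin 4)
    (h : i.val + 1 = j.val ∨ j.val + 1 = i.val) :
    s(f i, f j) = s(f 0, f 1) ∨ s(f i, f j) = s(f 1, f 2) ∨ s(f i, f j) = s(f 2, f 3) := by
  fin_cases i <;> fin_cases j <;> simp_all [Sym2.eq_swap]

/-- Structure of a subgraph isomorphic to `P₄`: there is an injection `f : Fin 4 → V`
enumerating its vertices such that its edges are exactly `f 0 f 1`, `f 1 f 2`, `f 2 f 3`. -/
private lemma P4Aux.p4_struct {n : ℕ} {G : SimpleGraph (Fin n)} (G' : G.Subgraph)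
    (e : G'.coe ≃g pathGraph 4) :
    ∃ f : Fin 4 → Fin n, Function.Injective f ∧
      G'.verts = {f 0, f 1, f 2, f 3} ∧
      ∀ p q, G'.Adj p q ↔
        (s(p, q) = s(f 0, f 1) ∨ s(p, q) = s(f 1, f 2) ∨ s(p, q) = s(f 2, f 3)) := by
  set f : Fin 4 → Fin n := fun i => ((e.symm i : G'.verts) : Fin n) with hfdef
  have hmem : ∀ z ∈ G'.verts, ∃ i : Fin 4, f i = z := by
    intro z hz
    exact ⟨e ⟨z, hz⟩, by simp [hfdef]⟩
  have hadj : ∀ i j : Fin 4, G'.Adj (f i) (f j) ↔ (pathGraph 4).Adj i j := by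
    intro i j
    rw [hfdef]
    rw [← SimpleGraph.Subgraph.coe_adj]
    exact e.symm.map_adj_iff
  refine ⟨f, fun i j hij => e.symm.injective (Subtype.val_injective hij), ?_, ?_⟩
  · ext z
    simp only [Set.mem_insert_iff, Set.mem_singleton_iff]
    constructor
    · intro hz
      obtain ⟨i, hi⟩ := hmem z hz
      fin_cases i <;> tauto
    · rintro (rfl | rfl | rfl | rfl) <;> exact (e.symm _).2
  · intro p q
    constructor
    · intro h
      obtain ⟨i, rfl⟩ := hmem p (G'.edge_vert h)
      obtain ⟨j, rfl⟩ := hmem q (G'.edge_vert h.symm)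
      have hij := (hadj i j).1 h
      rw [pathGraph_adj] at hij
      exact P4Aux.sym2_cases f i j hij
    · rintro (h | h | h) <;> rw [Sym2.eq_iff] at h <;>
        rcases h with ⟨rfl, rfl⟩ | ⟨rfl, rfl⟩ <;>
        exact (hadj _ _).2 (by rw [pathGraph_adj]; decide)

/-- Fingerprint relation: `inl (x, y)` encodes the middle-edge path `x-u-v-y`;
`inr (x, y)` encodes an end-edge path attached at `x` through `w ∈ {u, v}`. -/
private def P4Aux.FP {n : ℕ} (G : SimpleGraph (Fin n)) (u v : Fin n) (G' : G.Subgraph) :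
    (Fin n × Fin n) ⊕ (Fin n × Fin n) → Prop
  | Sum.inl (x, y) => G'.verts = {u, v, x, y} ∧
      ∀ p q, G'.Adj p q ↔ (s(p, q) = s(u, v) ∨ s(p, q) = s(u, x) ∨ s(p, q) = s(v, y))
  | Sum.inr (x, y) => ∃ w, (w = u ∨ w = v) ∧ G'.verts = {u, v, x, y} ∧
      ∀ p q, G'.Adj p q ↔ (s(p, q) = s(u, v) ∨ s(p, q) = s(w, x) ∨ s(p, q) = s(x, y))

/-- Target set of fingerprints. -/
private def P4Aux.TS {n : ℕ} (G : SimpleGraph (Fin n)) (u v : Fin n) :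
    Set ((Fin n × Fin n) ⊕ (Fin n × Fin n)) :=
  Sum.inl '' (({x : Fin n | x ≠ u ∧ x ≠ v ∧ G.Adj u x ∧ ¬ G.Adj v x} ×ˢ
      {x : Fin n | x ≠ u ∧ x ≠ v ∧ G.Adj v x ∧ ¬ G.Adj u x}) : Set (Fin n × Fin n)) ∪
  Sum.inr '' {p : Fin n × Fin n | (p.1 ≠ u ∧ p.1 ≠ v) ∧ (p.2 ≠ u ∧ p.2 ≠ v) ∧ G.Adj p.1 p.2}

private lemma P4Aux.FP_inj {n : ℕ} {G : SimpleGraph (Fin n)} {u v : Fin n}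
    (htri : ∀ w, ¬ (G.Adj u w ∧ G.Adj v w)) {G'₁ G'₂ : G.Subgraph}
    {t : (Fin n × Fin n) ⊕ (Fin n × Fin n)}
    (h1 : P4Aux.FP G u v G'₁ t) (h2 : P4Aux.FP G u v G'₂ t) : G'₁ = G'₂ := by
  obtain (⟨x, y⟩ | ⟨x, y⟩) := t
  · refine SimpleGraph.Subgraph.ext (h1.1.trans h2.1.symm) ?_
    funext p q
    exact propext ((h1.2 p q).trans (h2.2 p q).symm)
  · obtain ⟨w₁, hw₁, hv₁, ha₁⟩ := h1
    obtain ⟨w₂, hw₂, hv₂, ha₂⟩ := h2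
    have haw₁ : G.Adj w₁ x := ((ha₁ w₁ x).2 (Or.inr (Or.inl rfl))).adj_sub
    have haw₂ : G.Adj w₂ x := ((ha₂ w₂ x).2 (Or.inr (Or.inl rfl))).adj_sub
    have hww : w₁ = w₂ := by
      rcases hw₁ with rfl | rfl <;> rcases hw₂ with rfl | rfl
      · rfl
      · exact absurd ⟨haw₁, haw₂⟩ (htri x)
      · exact absurd ⟨haw₂, haw₁⟩ (htri x)
      · rfl
    subst hww
    refine SimpleGraph.Subgraph.ext (hv₁.trans hv₂.symm) ?_
    funext p q
    exact propext ((ha₁ p q).trans (ha₂ p q).symm)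

private lemma P4Aux.key {n : ℕ} {G : SimpleGraph (Fin n)} {u v : Fin n}
    (htri : ∀ w, ¬ (G.Adj u w ∧ G.Adj v w)) (G' : G.Subgraph)
    (e : G'.coe ≃g pathGraph 4) (hGuv : G'.Adj u v) :
    ∃ t, t ∈ P4Aux.TS G u v ∧ P4Aux.FP G u v G' t := by
  obtain ⟨f, hinj, hv, hiff⟩ := P4Aux.p4_struct G' e
  have a01 : G'.Adj (f 0) (f 1) := (hiff _ _).2 (Or.inl rfl)
  have a23 : G'.Adj (f 2) (f 3) := (hiff _ _).2 (Or.inr (Or.inr rfl))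
  have hne : ∀ i j : Fin 4, i ≠ j → f i ≠ f j := fun i j h => hinj.ne h
  have h0 := (hiff u v).1 hGuv
  rcases h0 with h | h | h <;> rw [Sym2.eq_iff] at h <;> rcases h with ⟨rfl, rfl⟩ | ⟨rfl, rfl⟩
  · exact ⟨Sum.inr (f 2, f 3),
      Or.inr ⟨(f 2, f 3), ⟨⟨hne 2 0 (by decide), hne 2 1 (by decide)⟩,
        ⟨hne 3 0 (by decide), hne 3 1 (by decide)⟩, a23.adj_sub⟩, rfl⟩,
      f 1, Or.inr rfl, hv, hiff⟩
  · refine ⟨Sum.inr (f 2, f 3),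
      Or.inr ⟨(f 2, f 3), ⟨⟨hne 2 1 (by decide), hne 2 0 (by decide)⟩,
        ⟨hne 3 1 (by decide), hne 3 0 (by decide)⟩, a23.adj_sub⟩, rfl⟩,
      f 1, Or.inl rfl, ?_, ?_⟩
    · rw [hv]; ext z; simp only [Set.mem_insert_iff, Set.mem_singleton_iff]; tauto
    · intro p q
      rw [hiff p q, show s(f 1, f 0) = s(f 0, f 1) from Sym2.eq_swap]
  · refine ⟨Sum.inl (f 0, f 3),
      Or.inl ⟨(f 0, f 3),
        ⟨⟨hne 0 1 (by decide), hne 0 2 (by decide), a01.symm.adj_sub,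
          fun hc => htri (f 0) ⟨a01.symm.adj_sub, hc⟩⟩,
         ⟨hne 3 1 (by decide), hne 3 2 (by decide), a23.adj_sub,
          fun hc => htri (f 3) ⟨hc, a23.adj_sub⟩⟩⟩, rfl⟩, ?_, ?_⟩
    · rw [hv]; ext z; simp only [Set.mem_insert_iff, Set.mem_singleton_iff]; tauto
    · intro p q
      rw [hiff p q, show s(f 1, f 0) = s(f 0, f 1) from Sym2.eq_swap]
      tauto
  · refine ⟨Sum.inl (f 3, f 0),
      Or.inl ⟨(f 3, f 0),
        ⟨⟨hne 3 2 (by decide), hne 3 1 (by decide), a23.adj_sub,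
          fun hc => htri (f 3) ⟨a23.adj_sub, hc⟩⟩,
         ⟨hne 0 2 (by decide), hne 0 1 (by decide), a01.symm.adj_sub,
          fun hc => htri (f 0) ⟨hc, a01.symm.adj_sub⟩⟩⟩, rfl⟩, ?_, ?_⟩
    · rw [hv]; ext z; simp only [Set.mem_insert_iff, Set.mem_singleton_iff]; tauto
    · intro p q
      rw [hiff p q, show s(f 2, f 1) = s(f 1, f 2) from Sym2.eq_swap,
        show s(f 1, f 0) = s(f 0, f 1) from Sym2.eq_swap]
      tauto
  · refine ⟨Sum.inr (f 1, f 0),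
      Or.inr ⟨(f 1, f 0), ⟨⟨hne 1 2 (by decide), hne 1 3 (by decide)⟩,
        ⟨hne 0 2 (by decide), hne 0 3 (by decide)⟩, a01.symm.adj_sub⟩, rfl⟩,
      f 2, Or.inl rfl, ?_, ?_⟩
    · rw [hv]; ext z; simp only [Set.mem_insert_iff, Set.mem_singleton_iff]; tauto
    · intro p q
      rw [hiff p q, show s(f 2, f 1) = s(f 1, f 2) from Sym2.eq_swap,
        show s(f 1, f 0) = s(f 0, f 1) from Sym2.eq_swap]
      tauto
  · refine ⟨Sum.inr (f 1, f 0),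
      Or.inr ⟨(f 1, f 0), ⟨⟨hne 1 3 (by decide), hne 1 2 (by decide)⟩,
        ⟨hne 0 3 (by decide), hne 0 2 (by decide)⟩, a01.symm.adj_sub⟩, rfl⟩,
      f 2, Or.inr rfl, ?_, ?_⟩
    · rw [hv]; ext z; simp only [Set.mem_insert_iff, Set.mem_singleton_iff]; tauto
    · intro p q
      rw [hiff p q, show s(f 3, f 2) = s(f 2, f 3) from Sym2.eq_swap,
        show s(f 2, f 1) = s(f 1, f 2) from Sym2.eq_swap,
        show s(f 1, f 0) = s(f 0, f 1) from Sym2.eq_swap]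
      tauto

/-- Let `G` be a `C₅`-free graph on `n` vertices and `uv` an edge contained in no triangle.
Then the number of copies of `P₄` containing the edge `uv` is at most `2e' + |B||C|`, where
`e'` is the number of edges of `G - {u, v}`, `B` is the set of vertices adjacent to `u` but
not `v`, and `C` is the set of vertices adjacent to `v` but not `u`. -/
theorem p4_through_triangle_free_edge_le (n : ℕ) (G : SimpleGraph (Fin n))
    (hC5free : _root_.copyCount (cycleGraph 5) G = 0) (u v : Fin n) (huv : G.Adj u v)
    (htri : ∀ w, ¬ (G.Adj u w ∧ G.Adj v w)) :
    copyCountThrough (pathGraph 4) G u v ≤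
      2 * (G.induce {x : Fin n | x ≠ u ∧ x ≠ v}).edgeSet.ncard +
        {x : Fin n | x ≠ u ∧ x ≠ v ∧ G.Adj u x ∧ ¬ G.Adj v x}.ncard *
          {x : Fin n | x ≠ u ∧ x ≠ v ∧ G.Adj v x ∧ ¬ G.Adj u x}.ncard := by
  classical
  set B : Set (Fin n) := {x : Fin n | x ≠ u ∧ x ≠ v ∧ G.Adj u x ∧ ¬ G.Adj v x} with hB
  set C : Set (Fin n) := {x : Fin n | x ≠ u ∧ x ≠ v ∧ G.Adj v x ∧ ¬ G.Adj u x} with hC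
  set D : Set (Fin n × Fin n) :=
    {p : Fin n × Fin n | (p.1 ≠ u ∧ p.1 ≠ v) ∧ (p.2 ≠ u ∧ p.2 ≠ v) ∧ G.Adj p.1 p.2} with hD
  -- Step 1: injection into the fingerprint set
  have hle1 : copyCountThrough (pathGraph 4) G u v ≤ (P4Aux.TS G u v).ncard := by
    unfold copyCountThrough
    refine Set.ncard_le_ncard_of_injOn
      (fun G' => if h : Nonempty (G'.coe ≃g pathGraph 4) ∧ G'.Adj u v then
        (P4Aux.key htri G' h.1.some h.2).choose else Sum.inl (u, u)) ?_ ?_ (Set.toFinite _)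
    · intro G' hG'
      have h : Nonempty (G'.coe ≃g pathGraph 4) ∧ G'.Adj u v := hG'
      simp only [dif_pos h]
      exact (P4Aux.key htri G' h.1.some h.2).choose_spec.1
    · intro G₁ h1 G₂ h2 heq
      have h1' : Nonempty (G₁.coe ≃g pathGraph 4) ∧ G₁.Adj u v := h1
      have h2' : Nonempty (G₂.coe ≃g pathGraph 4) ∧ G₂.Adj u v := h2
      simp only [dif_pos h1', dif_pos h2'] at heq
      refine P4Aux.FP_inj htri (P4Aux.key htri G₁ h1'.1.some h1'.2).choose_spec.2 ?_
      rw [heq]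
      exact (P4Aux.key htri G₂ h2'.1.some h2'.2).choose_spec.2
  -- Step 2: size of the fingerprint set
  have hle2 : (P4Aux.TS G u v).ncard ≤ (B ×ˢ C).ncard + D.ncard := by
    refine (Set.ncard_union_le _ _).trans ?_
    rw [Set.ncard_image_of_injective _ Sum.inl_injective,
      Set.ncard_image_of_injective _ Sum.inr_injective]
  -- Step 3: the product set
  have h3 : (B ×ˢ C).ncard = B.ncard * C.ncard := by
    rw [← Nat.card_coe_set_eq, ← Nat.card_coe_set_eq, ← Nat.card_coe_set_eq,
      ← Nat.card_prod]
    exact Nat.card_congr (Equiv.Set.prod B C)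
  -- Step 4: ordered adjacent pairs vs edges of the induced graph
  have h4 : D.ncard = 2 * (G.induce {x : Fin n | x ≠ u ∧ x ≠ v}).edgeSet.ncard := by
    set s : Set (Fin n) := {x : Fin n | x ≠ u ∧ x ≠ v} with hs
    set H := G.induce s with hH
    have h1 : D.ncard = {p : ↥s × ↥s | H.Adj p.1 p.2}.ncard := by
      rw [← Nat.card_coe_set_eq, ← Nat.card_coe_set_eq]
      refine Nat.card_congr ⟨fun p => ⟨(⟨p.1.1, p.2.1.1, p.2.1.2⟩, ⟨p.1.2, p.2.2.1.1, p.2.2.1.2⟩),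
          p.2.2.2⟩,
        fun q => ⟨(q.1.1.1, q.1.2.1), ⟨q.1.1.2.1, q.1.1.2.2⟩, ⟨q.1.2.2.1, q.1.2.2.2⟩, q.2⟩,
        ?_, ?_⟩
      · rintro ⟨⟨a, b⟩, h⟩; rfl
      · rintro ⟨⟨⟨a, ha⟩, ⟨b, hb⟩⟩, h⟩; rfl
    rw [h1, ← Nat.card_coe_set_eq, Nat.card_eq_card_toFinset,
      show H.edgeSet = ↑H.edgeFinset from (Set.coe_toFinset _).symm, Set.ncard_coe_finset,
      SimpleGraph.two_mul_card_edgeFinset]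
    congr 1
    ext ⟨a, b⟩
    simp
  calc copyCountThrough (pathGraph 4) G u v ≤ (P4Aux.TS G u v).ncard := hle1
    _ ≤ (B ×ˢ C).ncard + D.ncard := hle2
    _ = 2 * (G.induce {x : Fin n | x ≠ u ∧ x ≠ v}).edgeSet.ncard + B.ncard * C.ncard := by
        rw [h3, h4, Nat.add_comm]
end

section
/- Let n be large and G an F_2-free graph on n vertices, where F_2 is two triangles sharing exactly one vertex. If an edge uv of G lies in a copy of K_4, then every vertex outside that K_4 is adjacent to at most one vertex of the K_4, and consequently the number of copies of C_4 containing uv is at most 3 + ⌊(n−4)²/4⌋, assuming ex(n−4, F_2) = ⌊(n−4)²/4⌋ + 1. -/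
open SimpleGraph

/-- The 2-fan `F₂`: two triangles `{0,1,2}` and `{0,3,4}` sharing exactly the vertex `0`. -/
def fanGraphTwo : SimpleGraph (Fin 5) :=
  SimpleGraph.fromEdgeSet {s(0, 1), s(0, 2), s(1, 2), s(0, 3), s(0, 4), s(3, 4)}

set_option linter.unreachableTactic false
set_option linter.unusedTactic false

lemma fan_adj_iff (i j : Fin 5) : fanGraphTwo.Adj i j ↔
    (i,j) ∈ [((0:Fin 5),(1:Fin 5)),(1,0),(0,2),(2,0),(1,2),(2,1),(0,3),(3,0),(0,4),(4,0),(3,4),(4,3)] := by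
  simp only [fanGraphTwo, fromEdgeSet_adj, Set.mem_insert_iff, Set.mem_singleton_iff]
  constructor
  · rintro ⟨h, hne⟩
    fin_cases i <;> fin_cases j <;> simp_all [Sym2.eq, Sym2.rel_iff']
  · intro h
    fin_cases i <;> fin_cases j <;> revert h <;> decide

lemma subgraph_finite {β : Type*} [Finite β] (G : SimpleGraph β) : Finite G.Subgraph := by
  have : Function.Injective (fun G' : G.Subgraph => (G'.verts, G'.Adj)) := by
    intro a b h
    simp only [Prod.mk.injEq] at h
    exact SimpleGraph.Subgraph.ext h.1 h.2
  exact Finite.of_injective _ this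

noncomputable def isoMapCoe {α β : Type*} {A : SimpleGraph α} {B : SimpleGraph β}
    (f : A →g B) (hf : Function.Injective f) (H : A.Subgraph) : H.coe ≃g (H.map f).coe := by
  refine ⟨Equiv.ofBijective (fun a : H.verts => (⟨f a, ⟨a, a.2, rfl⟩⟩ : (H.map f).verts)) ⟨?_, ?_⟩, ?_⟩
  · intro a b h
    simp only [Subtype.mk.injEq] at h
    exact Subtype.ext (hf (congrArg Subtype.val h))
  · rintro ⟨_, a, ha, rfl⟩
    exact ⟨⟨a, ha⟩, rfl⟩
  · intro a b
    simp only [Equiv.ofBijective_apply, Subgraph.coe_adj, Subgraph.map_adj, Relation.Map]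
    constructor
    · rintro ⟨c, d, h, hc, hd⟩
      rwa [hf hc, hf hd] at h
    · intro h
      exact ⟨a, b, h, rfl, rfl⟩

lemma copyCount_ne_zero_of_hom {α β : Type*} [Fintype β] {F : SimpleGraph α} {G : SimpleGraph β}
    (f : F →g G) (hf : Function.Injective f) : copyCount F G ≠ 0 := by
  have hfin := subgraph_finite G
  intro h0
  rw [_root_.copyCount, Set.ncard_eq_zero (Set.toFinite _)] at h0
  have : ((⊤ : F.Subgraph).map f) ∈ {G' : G.Subgraph | Nonempty (G'.coe ≃g F)} :=
    ⟨((isoMapCoe f hf ⊤).symm.trans Subgraph.topIso)⟩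
  rw [h0] at this
  exact this

lemma copyCount_zero_of_hom {α β γ : Type*} [Fintype β] [Fintype γ] {F : SimpleGraph α}
    {G : SimpleGraph β} {A : SimpleGraph γ} (f : A →g G) (hf : Function.Injective f)
    (h : copyCount F G = 0) : copyCount F A = 0 := by
  by_contra hA
  have hfinA := subgraph_finite A
  rw [_root_.copyCount, Set.ncard_eq_zero (Set.toFinite _), Set.eq_empty_iff_forall_notMem] at hA
  push_neg at hA
  obtain ⟨H', ⟨e⟩⟩ := hA
  have hfin := subgraph_finite G
  rw [_root_.copyCount, Set.ncard_eq_zero (Set.toFinite _)] at h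
  have : (H'.map f) ∈ {G' : G.Subgraph | Nonempty (G'.coe ≃g F)} :=
    ⟨(isoMapCoe f hf H').symm.trans e⟩
  rw [h] at this
  exact this

lemma no_fan {n : ℕ} {G : SimpleGraph (Fin n)} (hfree : _root_.copyCount fanGraphTwo G = 0)
    (a b c d z : Fin n)
    (hab : a ≠ b) (hac : a ≠ c) (had : a ≠ d) (haz : a ≠ z)
    (hbc : b ≠ c) (hbd : b ≠ d) (hbz : b ≠ z) (hcd : c ≠ d) (hcz : c ≠ z) (hdz : d ≠ z)
    (h1 : G.Adj a z) (h2 : G.Adj a b) (h3 : G.Adj z b)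
    (h4 : G.Adj a c) (h5 : G.Adj a d) (h6 : G.Adj c d) : False := by
  let f : Fin 5 → Fin n := ![a, z, b, c, d]
  have hadj : ∀ i j, fanGraphTwo.Adj i j → G.Adj (f i) (f j) := by
    intro i j h
    rw [fan_adj_iff] at h
    fin_cases i <;> fin_cases j <;> simp_all [f] <;>
      (first
        | exact h1 | exact h1.symm | exact h2 | exact h2.symm | exact h3
        | exact h3.symm | exact h4 | exact h4.symm | exact h5 | exact h5.symm
        | exact h6 | exact h6.symm | (revert h; decide))
  have hinj : Function.Injective f := by
    intro i j h
    fin_cases i <;> fin_cases j <;> simp_all [f] <;> simp_all [eq_comm]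
  exact copyCount_ne_zero_of_hom ⟨f, fun {i j} h => hadj i j h⟩ hinj hfree

lemma fan_helper {n : ℕ} {G : SimpleGraph (Fin n)} (hfree : _root_.copyCount fanGraphTwo G = 0)
    (a b c d z : Fin n)
    (hab : a ≠ b) (hac : a ≠ c) (had : a ≠ d) (haz : a ≠ z)
    (hbc : b ≠ c) (hbd : b ≠ d) (hbz : b ≠ z) (hcd : c ≠ d) (hcz : c ≠ z) (hdz : d ≠ z)
    (h2 : G.Adj a b) (h4 : G.Adj a c) (h5 : G.Adj a d) (h6 : G.Adj c d)
    (hza : G.Adj z a) (hzb : G.Adj z b) : False :=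
  no_fan hfree a b c d z hab hac had haz hbc hbd hbz hcd hcz hdz hza.symm h2 hzb h4 h5 h6

lemma K4_no_two {n : ℕ} {G : SimpleGraph (Fin n)} (hfree : _root_.copyCount fanGraphTwo G = 0)
    {u v x y : Fin n} (hdist : [u, v, x, y].Nodup)
    (hK4 : G.Adj u v ∧ G.Adj u x ∧ G.Adj u y ∧ G.Adj v x ∧ G.Adj v y ∧ G.Adj x y) :
    ∀ z : Fin n, z ∉ ({u, v, x, y} : Set (Fin n)) →
      ∀ a ∈ ({u, v, x, y} : Set (Fin n)), ∀ b ∈ ({u, v, x, y} : Set (Fin n)),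
        a ≠ b → ¬ (G.Adj z a ∧ G.Adj z b) := by
  obtain ⟨huv, hux, huy, hvx, hvy, hxy⟩ := hK4
  have hvu := huv.symm; have hxu := hux.symm; have hyu := huy.symm
  have hxv := hvx.symm; have hyv := hvy.symm; have hyx := hxy.symm
  simp only [List.nodup_cons, List.mem_cons, List.not_mem_nil, or_false, List.mem_singleton,
    List.nodup_nil, and_true, not_or] at hdist
  obtain ⟨⟨nuv, nux, nuy⟩, ⟨nvx, nvy⟩, nxy, -⟩ := hdist
  have nvu := Ne.symm nuv; have nxu := Ne.symm nux; have nyu := Ne.symm nuy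
  have nxv := Ne.symm nvx; have nyv := Ne.symm nvy; have nyx := Ne.symm nxy
  intro z hz a ha b hb hab ⟨hza, hzb⟩
  simp only [Set.mem_insert_iff, Set.mem_singleton_iff, not_or] at hz ha hb
  obtain ⟨nzu, nzv, nzx, nzy⟩ := hz
  have nuz := Ne.symm nzu; have nvz := Ne.symm nzv; have nxz := Ne.symm nzx
  have nyz := Ne.symm nzy
  rcases ha with rfl | rfl | rfl | rfl <;> rcases hb with rfl | rfl | rfl | rfl <;>
    first
    | exact absurd rfl hab
    | (apply fan_helper hfree a b u v z <;> assumption)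
    | (apply fan_helper hfree a b u x z <;> assumption)
    | (apply fan_helper hfree a b u y z <;> assumption)
    | (apply fan_helper hfree a b v x z <;> assumption)
    | (apply fan_helper hfree a b v y z <;> assumption)
    | (apply fan_helper hfree a b x y z <;> assumption)

lemma cycle4_adj_iff (i j : Fin 4) : (cycleGraph 4).Adj i j ↔
    (i,j) ∈ [((0:Fin 4),(1:Fin 4)),(1,0),(1,2),(2,1),(2,3),(3,2),(3,0),(0,3)] := by
  revert i j; decide

lemma cycle4_normalize (i j : Fin 4) (h : (cycleGraph 4).Adj i j) :
    ∃ σ : Equiv.Perm (Fin 4), (∀ a b, (cycleGraph 4).Adj (σ a) (σ b) ↔ (cycleGraph 4).Adj a b)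
      ∧ σ i = 0 ∧ σ j = 1 := by
  revert h; revert i j; decide

lemma c4_extract {n : ℕ} {G : SimpleGraph (Fin n)} {G' : G.Subgraph}
    (e : G'.coe ≃g cycleGraph 4) {u v : Fin n} (huv : G'.Adj u v) :
    ∃ w z : Fin n, u ≠ w ∧ u ≠ z ∧ v ≠ w ∧ v ≠ z ∧ w ≠ z ∧
      G.Adj v w ∧ G.Adj w z ∧ G.Adj z u ∧
      G'.verts = {u, v, w, z} ∧
      (∀ a b, G'.Adj a b ↔
        (s(a,b) = s(u,v) ∨ s(a,b) = s(v,w) ∨ s(a,b) = s(w,z) ∨ s(a,b) = s(z,u))) := by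
  have hu : u ∈ G'.verts := huv.fst_mem
  have hv : v ∈ G'.verts := huv.snd_mem
  have huv' : G'.coe.Adj ⟨u, hu⟩ ⟨v, hv⟩ := huv
  obtain ⟨σ, hσ, hσu, hσv⟩ := cycle4_normalize _ _ (e.map_rel_iff.mpr huv')
  let σiso : cycleGraph 4 ≃g cycleGraph 4 := ⟨σ, hσ _ _⟩
  let E : G'.coe ≃g cycleGraph 4 := e.trans σiso
  have hEu : E ⟨u, hu⟩ = 0 := hσu
  have hEv : E ⟨v, hv⟩ = 1 := hσv
  let c : Fin 4 → Fin n := fun i => ((E.symm i : G'.verts) : Fin n)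
  have hcmem : ∀ i, c i ∈ G'.verts := fun i => (E.symm i).2
  have hc0 : c 0 = u := by
    have : E.symm 0 = ⟨u, hu⟩ := by rw [← hEu]; exact E.symm_apply_apply _
    simp only [c, this]
  have hc1 : c 1 = v := by
    have : E.symm 1 = ⟨v, hv⟩ := by rw [← hEv]; exact E.symm_apply_apply _
    simp only [c, this]
  have cinj : Function.Injective c :=
    Subtype.val_injective.comp (E.symm.toEquiv.injective)
  have hvertsmem : ∀ a, a ∈ G'.verts → ∃ i, a = c i := by
    intro a ha
    refine ⟨E ⟨a, ha⟩, ?_⟩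
    simp only [c, E.symm_apply_apply]
  have hadjc : ∀ i j : Fin 4, G'.Adj (c i) (c j) ↔ (cycleGraph 4).Adj i j := by
    intro i j
    have h1 : G'.Adj (c i) (c j) ↔ G'.coe.Adj (E.symm i) (E.symm j) := by
      simp only [Subgraph.coe_adj, c]
    rw [h1, ← E.map_rel_iff, E.apply_symm_apply, E.apply_symm_apply]
  refine ⟨c 2, c 3, ?_, ?_, ?_, ?_, ?_, ?_, ?_, ?_, ?_, ?_⟩
  · rw [← hc0]; intro h; exact (by decide : (0 : Fin 4) ≠ 2) (cinj h)
  · rw [← hc0]; intro h; exact (by decide : (0 : Fin 4) ≠ 3) (cinj h)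
  · rw [← hc1]; intro h; exact (by decide : (1 : Fin 4) ≠ 2) (cinj h)
  · rw [← hc1]; intro h; exact (by decide : (1 : Fin 4) ≠ 3) (cinj h)
  · intro h; exact (by decide : (2 : Fin 4) ≠ 3) (cinj h)
  · rw [← hc1]; exact G'.adj_sub ((hadjc 1 2).mpr (by decide))
  · exact G'.adj_sub ((hadjc 2 3).mpr (by decide))
  · rw [← hc0]; exact G'.adj_sub ((hadjc 3 0).mpr (by decide))
  · ext a
    simp only [Set.mem_insert_iff, Set.mem_singleton_iff]
    constructor
    · intro ha
      obtain ⟨i, rfl⟩ := hvertsmem a ha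
      have : i = 0 ∨ i = 1 ∨ i = 2 ∨ i = 3 := by omega
      rcases this with rfl | rfl | rfl | rfl
      · exact Or.inl hc0
      · exact Or.inr (Or.inl hc1)
      · exact Or.inr (Or.inr (Or.inl rfl))
      · exact Or.inr (Or.inr (Or.inr rfl))
    · rintro (rfl | rfl | rfl | rfl)
      · exact hu
      · exact hv
      · exact hcmem 2
      · exact hcmem 3
  · intro a b
    constructor
    · intro hab
      obtain ⟨i, rfl⟩ := hvertsmem a hab.fst_mem
      obtain ⟨j, rfl⟩ := hvertsmem b hab.snd_mem
      have h4 := (hadjc i j).mp hab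
      rw [cycle4_adj_iff] at h4
      rw [← hc0, ← hc1]
      fin_cases h4 <;> simp_all <;>
        first
        | (left; rfl) | (right; left; rfl) | (right; right; left; rfl)
        | (right; right; right; rfl)
        | (left; exact Sym2.eq_swap) | (right; left; exact Sym2.eq_swap)
        | (right; right; left; exact Sym2.eq_swap)
        | (right; right; right; exact Sym2.eq_swap)
    · intro h
      rw [← hc0, ← hc1] at h
      rcases h with h | h | h | h <;> rw [Sym2.eq_iff] at h <;>
        rcases h with ⟨rfl, rfl⟩ | ⟨rfl, rfl⟩ <;> rw [hadjc] <;> decide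

theorem fanFree_c4_through_K4_edge' (n : ℕ) (G : SimpleGraph (Fin n))
    (hfree : _root_.copyCount fanGraphTwo G = 0) (u v x y : Fin n)
    (hdist : [u, v, x, y].Nodup)
    (hK4 : G.Adj u v ∧ G.Adj u x ∧ G.Adj u y ∧ G.Adj v x ∧ G.Adj v y ∧ G.Adj x y)
    (hex : ∀ H : SimpleGraph (Fin (n - 4)), _root_.copyCount fanGraphTwo H = 0 →
      H.edgeSet.ncard ≤ (n - 4) ^ 2 / 4 + 1) :
    (∀ z : Fin n, z ∉ ({u, v, x, y} : Set (Fin n)) →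
      ∀ a ∈ ({u, v, x, y} : Set (Fin n)), ∀ b ∈ ({u, v, x, y} : Set (Fin n)),
        a ≠ b → ¬ (G.Adj z a ∧ G.Adj z b)) ∧
      {G' : G.Subgraph | Nonempty (G'.coe ≃g cycleGraph 4) ∧ G'.Adj u v}.ncard
        ≤ 3 + (n - 4) ^ 2 / 4 := by
  classical
  have part1 := K4_no_two hfree hdist hK4
  refine ⟨part1, ?_⟩
  obtain ⟨huv, hux, huy, hvx, hvy, hxy⟩ := hK4
  have hdist' := hdist
  simp only [List.nodup_cons, List.mem_cons, List.not_mem_nil, or_false, List.mem_singleton,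
    List.nodup_nil, and_true, not_or] at hdist'
  obtain ⟨⟨nuv, nux, nuy⟩, ⟨nvx, nvy⟩, nxy, -⟩ := hdist'
  set K4 : Set (Fin n) := {u, v, x, y} with hK4def
  -- the complement and the graph H on it
  set Ω : Set (Fin n) := K4ᶜ with hΩdef
  haveI : Fintype Ω := Fintype.ofFinite _
  have hK4card : K4.ncard = 4 := by
    rw [hK4def, Set.ncard_insert_of_notMem (by simp [nuv, nux, nuy]) (Set.toFinite _),
      Set.ncard_insert_of_notMem (by simp [nvx, nvy]) (Set.toFinite _),
      Set.ncard_insert_of_notMem (by simp [nxy]) (Set.toFinite _), Set.ncard_singleton]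
  have hΩcard : Fintype.card Ω = n - 4 := by
    have h1 := Set.ncard_add_ncard_compl K4 (Set.toFinite _)
    have h2 : Nat.card (Fin n) = n := by simp
    rw [← Nat.card_eq_fintype_card, Nat.card_coe_set_eq, hΩdef]
    omega
  let eqv : Ω ≃ Fin (n - 4) := Fintype.equivFinOfCardEq hΩcard
  let H : SimpleGraph (Fin (n - 4)) := G.comap (fun i => ((eqv.symm i : Ω) : Fin n))
  have hHhom_inj : Function.Injective (fun i : Fin (n-4) => ((eqv.symm i : Ω) : Fin n)) :=
    Subtype.val_injective.comp eqv.symm.injective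
  have hHfree : _root_.copyCount fanGraphTwo H = 0 :=
    copyCount_zero_of_hom (⟨fun i => ((eqv.symm i : Ω) : Fin n), fun h => h⟩ : H →g G)
      hHhom_inj hfree
  have hHedge : H.edgeSet.ncard ≤ (n - 4) ^ 2 / 4 + 1 := hex H hHfree
  -- the pair sets
  set S : Set G.Subgraph := {G' | Nonempty (G'.coe ≃g cycleGraph 4) ∧ G'.Adj u v} with hSdef
  set spec : G.Subgraph → Fin n → Fin n → Prop := fun G' w z =>
    u ≠ w ∧ u ≠ z ∧ v ≠ w ∧ v ≠ z ∧ w ≠ z ∧ G.Adj v w ∧ G.Adj w z ∧ G.Adj z u ∧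
    G'.verts = {u, v, w, z} ∧ (∀ a b, G'.Adj a b ↔
      (s(a,b) = s(u,v) ∨ s(a,b) = s(v,w) ∨ s(a,b) = s(w,z) ∨ s(a,b) = s(z,u))) with hspecdef
  have hspec : ∀ G' ∈ S, ∃ w z, spec G' w z := fun G' hG' => c4_extract hG'.1.some hG'.2
  set Ψ : G.Subgraph → Fin n × Fin n := fun G' =>
    if h : ∃ w z, spec G' w z then (h.choose, h.choose_spec.choose) else (u, u) with hΨdef
  have hΨspec : ∀ G' ∈ S, spec G' (Ψ G').1 (Ψ G').2 := by
    intro G' hG'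
    have h := hspec G' hG'
    simp only [hΨdef, dif_pos h]
    exact h.choose_spec.choose_spec
  set P : Set (Fin n × Fin n) := {p | u ≠ p.1 ∧ u ≠ p.2 ∧ v ≠ p.1 ∧ v ≠ p.2 ∧ p.1 ≠ p.2 ∧
    G.Adj v p.1 ∧ G.Adj p.1 p.2 ∧ G.Adj p.2 u} with hPdef
  have hSP : S.ncard ≤ P.ncard := by
    apply Set.ncard_le_ncard_of_injOn Ψ
    · intro G' hG'
      obtain ⟨h1, h2, h3, h4, h5, h6, h7, h8, -, -⟩ := hΨspec G' hG'
      exact ⟨h1, h2, h3, h4, h5, h6, h7, h8⟩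
    · intro G1 h1 G2 h2 heq
      obtain ⟨-, -, -, -, -, -, -, -, hv1, ha1⟩ := hΨspec G1 h1
      obtain ⟨-, -, -, -, -, -, -, -, hv2, ha2⟩ := hΨspec G2 h2
      rw [heq] at hv1 ha1
      refine SimpleGraph.Subgraph.ext (hv1.trans hv2.symm) ?_
      funext a b
      exact propext ((ha1 a b).trans (ha2 a b).symm)
  -- split P
  set Pout : Set (Fin n × Fin n) := P ∩ {p | p.1 ∈ Ω ∧ p.2 ∈ Ω} with hPoutdef
  have hPsplit : P ⊆ ({(x,y), (y,x)} : Set (Fin n × Fin n)) ∪ Pout := by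
    rintro ⟨w, z⟩ ⟨h1, h2, h3, h4, h5, h6, h7, h8⟩
    have hwmem : w ∉ Ω → w = x ∨ w = y := by
      intro hw
      rw [hΩdef, Set.notMem_compl_iff, hK4def] at hw
      simp only [Set.mem_insert_iff, Set.mem_singleton_iff] at hw
      rcases hw with rfl | rfl | rfl | rfl
      · exact absurd rfl h1
      · exact absurd rfl h3
      · exact Or.inl rfl
      · exact Or.inr rfl
    have hzmem : z ∉ Ω → z = x ∨ z = y := by
      intro hz
      rw [hΩdef, Set.notMem_compl_iff, hK4def] at hz
      simp only [Set.mem_insert_iff, Set.mem_singleton_iff] at hz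
      rcases hz with rfl | rfl | rfl | rfl
      · exact absurd rfl h2
      · exact absurd rfl h4
      · exact Or.inl rfl
      · exact Or.inr rfl
    by_cases hw : w ∈ Ω
    · by_cases hz : z ∈ Ω
      · exact Or.inr ⟨⟨h1, h2, h3, h4, h5, h6, h7, h8⟩, hw, hz⟩
      · -- z ∈ {x,y}, w outside: w adjacent to v and z, contradiction
        exfalso
        rcases hzmem hz with rfl | rfl
        · exact part1 w hw v (by simp [hK4def]) z (by simp [hK4def]) h4
            ⟨h6.symm, h7⟩
        · exact part1 w hw v (by simp [hK4def]) z (by simp [hK4def]) h4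
            ⟨h6.symm, h7⟩
    · rcases hwmem hw with rfl | rfl
      · -- w = x; z must be y
        by_cases hz : z ∈ Ω
        · exact absurd ⟨h7.symm, h8⟩
            (part1 z hz w (by simp [hK4def]) u (by simp [hK4def]) (Ne.symm h1))
        · rcases hzmem hz with rfl | rfl
          · exact absurd rfl h5
          · exact Or.inl (Or.inl rfl)
      · by_cases hz : z ∈ Ω
        · exact absurd ⟨h7.symm, h8⟩
            (part1 z hz w (by simp [hK4def]) u (by simp [hK4def]) (Ne.symm h1))
        · rcases hzmem hz with rfl | rfl
          · exact Or.inl (Or.inr rfl)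
          · exact absurd rfl h5
  have hPcard : P.ncard ≤ 2 + Pout.ncard := by
    calc P.ncard ≤ (({(x,y), (y,x)} : Set (Fin n × Fin n)) ∪ Pout).ncard :=
          Set.ncard_le_ncard hPsplit (Set.toFinite _)
      _ ≤ ({(x,y), (y,x)} : Set (Fin n × Fin n)).ncard + Pout.ncard :=
          Set.ncard_union_le _ _
      _ ≤ 2 + Pout.ncard := by
          gcongr
          exact (Set.ncard_insert_le _ _).trans (by simp)
  -- injection from Pout into edges of H
  have hPoutcard : Pout.ncard ≤ H.edgeSet.ncard := by
    rcases Set.eq_empty_or_nonempty Pout with hE | ⟨⟨w0, z0⟩, hp0⟩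
    · simp [hE]
    haveI : Nonempty (Fin (n - 4)) := ⟨eqv ⟨w0, hp0.2.1⟩⟩
    set g : Fin n → Fin (n - 4) := fun a =>
      if h : a ∈ Ω then eqv ⟨a, h⟩ else Classical.arbitrary _ with hgdef
    have hg : ∀ a (h : a ∈ Ω), ((eqv.symm (g a) : Ω) : Fin n) = a := by
      intro a h
      simp only [hgdef, dif_pos h, Equiv.symm_apply_apply]
    have hginj : ∀ a b, a ∈ Ω → b ∈ Ω → g a = g b → a = b := by
      intro a b ha hb hab
      have h2 : ((eqv.symm (g a) : Ω) : Fin n) = ((eqv.symm (g b) : Ω) : Fin n) :=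
        congrArg (fun t => ((eqv.symm t : Ω) : Fin n)) hab
      rwa [hg a ha, hg b hb] at h2
    apply Set.ncard_le_ncard_of_injOn (fun p => s(g p.1, g p.2))
    · rintro ⟨w, z⟩ ⟨⟨-, -, -, -, -, -, h7, -⟩, hw, hz⟩
      show H.Adj (g w) (g z)
      have h7' := h7
      rw [← hg w hw, ← hg z hz] at h7'
      exact h7'
    · rintro ⟨w, z⟩ ⟨⟨-, -, -, h4, -, h6, -, h8⟩, hw, hz⟩
        ⟨w', z'⟩ ⟨⟨-, -, -, -, -, h6', -, h8'⟩, hw', hz'⟩ heq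
      simp only [Sym2.eq_iff] at heq
      rcases heq with ⟨e1, e2⟩ | ⟨e1, e2⟩
      · exact Prod.ext (hginj _ _ hw hw' e1) (hginj _ _ hz hz' e2)
      · exfalso
        have ew : w = z' := hginj _ _ hw hz' e1
        have ez : z = w' := hginj _ _ hz hw' e2
        subst ew; subst ez
        exact part1 w hw u (by simp [hK4def]) v (by simp [hK4def]) nuv
          ⟨h8', h6.symm⟩
  calc S.ncard ≤ P.ncard := hSP
    _ ≤ 2 + Pout.ncard := hPcard
    _ ≤ 2 + ((n - 4) ^ 2 / 4 + 1) := by gcongr; exact hPoutcard.trans hHedge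
    _ = 3 + (n - 4) ^ 2 / 4 := by ring


/-- Let `G` be an `F₂`-free graph on `n` vertices and suppose the edge `uv` lies in a `K₄`
with vertices `u, v, x, y`. Then every vertex outside the `K₄` is adjacent to at most one of
its vertices, and (assuming the Erdős–Füredi–Gould–Gunderson bound
`ex(n - 4, F₂) = ⌊(n-4)²/4⌋ + 1`) the number of copies of `C₄` containing `uv` is at most
`3 + ⌊(n-4)²/4⌋`. -/
theorem fanFree_c4_through_K4_edge (n : ℕ) (G : SimpleGraph (Fin n))
    (hfree : _root_.copyCount fanGraphTwo G = 0) (u v x y : Fin n)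
    (hdist : [u, v, x, y].Nodup)
    (hK4 : G.Adj u v ∧ G.Adj u x ∧ G.Adj u y ∧ G.Adj v x ∧ G.Adj v y ∧ G.Adj x y)
    (hex : ∀ H : SimpleGraph (Fin (n - 4)), _root_.copyCount fanGraphTwo H = 0 →
      H.edgeSet.ncard ≤ (n - 4) ^ 2 / 4 + 1) :
    (∀ z : Fin n, z ∉ ({u, v, x, y} : Set (Fin n)) →
      ∀ a ∈ ({u, v, x, y} : Set (Fin n)), ∀ b ∈ ({u, v, x, y} : Set (Fin n)),
        a ≠ b → ¬ (G.Adj z a ∧ G.Adj z b)) ∧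
      copyCountThrough (cycleGraph 4) G u v ≤ 3 + (n - 4) ^ 2 / 4 := by
  have h := fanFree_c4_through_K4_edge' n G hfree u v x y hdist hK4 hex
  exact ⟨h.1, h.2⟩
end
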